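/- arXiv:1909.11312 — 14 statements merged into one kernel-verified Lean document; each statement's English description precedes it below -/
import Mathlib

section
/- Let r be a solution of the classical Yang–Baxter equation on L. Then for all x, y ∈ L: [R(x), R(y)] − R([x, R(y)]) + R([R*(x), y]) = 0. -/
open TensorProduct

theorem stmt_0 (F : Type*) [Field F] [CharZero F]
    (L : Type*) [LieRing L] [LieAlgebra F L] [FiniteDimensional F L]
    (ω : LinearMap.BilinForm F L)
    (hnd : ω.Nondegenerate)
    (hsymm : ∀ x y : L, ω x y = ω y x)
    (hinv : ∀ x y z : L, ω ⁅x, y⁆ z = ω x ⁅y, z⁆)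
    (ι : Type*) [Fintype ι] (a b : ι → L)
    (hCYBE : ∑ i, ∑ j, (⁅a i, a j⁆ ⊗ₜ[F] (b i ⊗ₜ[F] b j)
        - a i ⊗ₜ[F] (⁅a j, b i⁆ ⊗ₜ[F] b j)
        + a i ⊗ₜ[F] (a j ⊗ₜ[F] ⁅b i, b j⁆)) = (0 : L ⊗[F] (L ⊗[F] L)))
    (R Rstar : L →ₗ[F] L)
    (hR : ∀ x : L, R x = ∑ i, ω (b i) x • a i)
    (hadj : ∀ x y : L, ω (R x) y = ω x (Rstar y)) :
    ∀ x y : L, ⁅R x, R y⁆ - R ⁅x, R y⁆ + R ⁅Rstar x, y⁆ = 0 := by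
  intro x y
  -- formula for Rstar
  have hsep : ∀ u v : L, (∀ w, ω w u = ω w v) → u = v := by
    intro u v h
    have h0 : ∀ w : L, ω (u - v) w = 0 := by
      intro w
      rw [hsymm]
      simp [h w]
    have := hnd.1 (u - v) h0
    rwa [sub_eq_zero] at this
  have hRstar : Rstar x = ∑ j, ω (a j) x • b j := by
    apply hsep
    intro w
    rw [← hadj, hR]
    simp only [map_sum, map_smul, LinearMap.sum_apply, LinearMap.smul_apply,
      smul_eq_mul]
    refine Finset.sum_congr rfl fun i _ => ?_
    rw [hsymm w (b i), mul_comm]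
  -- the pairing map
  set g : L ⊗[F] L →ₗ[F] F :=
    TensorProduct.lift ((ω.flip x).smulRight (ω.flip y)) with hg
  set Φ : L ⊗[F] (L ⊗[F] L) →ₗ[F] L :=
    TensorProduct.lift (((LinearMap.lsmul F L).comp g).flip) with hΦ
  have hΦt : ∀ u v w : L, Φ (u ⊗ₜ[F] (v ⊗ₜ[F] w)) = (ω v x * ω w y) • u := by
    intro u v w
    simp [hΦ, hg, smul_eq_mul]
  have liesum : ∀ (z : L) (f : ι → L), ⁅z, ∑ i, f i⁆ = ∑ i, ⁅z, f i⁆ := by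
    intro z f
    exact map_sum (LieAlgebra.ad F L z) f Finset.univ
  have sumlie : ∀ (f : ι → L) (z : L), ⁅∑ i, f i, z⁆ = ∑ i, ⁅f i, z⁆ := by
    intro f z
    rw [← lie_skew, liesum z f, ← Finset.sum_neg_distrib]
    exact Finset.sum_congr rfl fun i _ => lie_skew (f i) z
  have key := congrArg Φ hCYBE
  rw [map_zero, map_sum] at key
  simp only [map_sum, map_sub, map_add, hΦt] at key
  have e1 : ⁅R x, R y⁆ = ∑ i, ∑ j, (ω (b i) x * ω (b j) y) • ⁅a i, a j⁆ := by
    rw [hR x, hR y, sumlie]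
    refine Finset.sum_congr rfl fun i _ => ?_
    rw [smul_lie, liesum, Finset.smul_sum]
    exact Finset.sum_congr rfl fun j _ => by rw [lie_smul, smul_smul]
  have e2 : R ⁅x, R y⁆ = ∑ i, ∑ j, (ω ⁅a j, b i⁆ x * ω (b j) y) • a i := by
    rw [hR ⁅x, R y⁆]
    refine Finset.sum_congr rfl fun i _ => ?_
    rw [← Finset.sum_smul]
    congr 1
    rw [hR y, liesum, map_sum]
    refine Finset.sum_congr rfl fun j _ => ?_
    rw [lie_smul, map_smul, smul_eq_mul, mul_comm]
    congr 1
    rw [hinv (a j) (b i) x, hsymm (a j) ⁅b i, x⁆, hinv (b i) x (a j)]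
  have e3 : R ⁅Rstar x, y⁆ = ∑ i, ∑ j, (ω (a j) x * ω ⁅b i, b j⁆ y) • a i := by
    rw [hR ⁅Rstar x, y⁆, hRstar]
    refine Finset.sum_congr rfl fun i _ => ?_
    rw [← Finset.sum_smul]
    congr 1
    rw [sumlie, map_sum]
    refine Finset.sum_congr rfl fun j _ => ?_
    rw [smul_lie, map_smul, smul_eq_mul]
    congr 1
    rw [hinv (b i) (b j) y]
  rw [e1, e2, e3]
  simp only [← Finset.sum_sub_distrib, ← Finset.sum_add_distrib]
  exact key
end

section
/- Let r be a solution of the classical Yang–Baxter equation on L. Then for all x, y ∈ L: [R*(x), R*(y)] + R*([x, R(y)]) − R*([R*(x), y]) = 0. -/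
open TensorProduct

theorem stmt_1
    (F : Type*) [Field F] [CharZero F]
    (L : Type*) [LieRing L] [LieAlgebra F L] [FiniteDimensional F L]
    (ω : LinearMap.BilinForm F L)
    (hnd : ω.Nondegenerate)
    (hsymm : ∀ x y : L, ω x y = ω y x)
    (hinv : ∀ x y z : L, ω ⁅x, y⁆ z = ω x ⁅y, z⁆)
    (ι : Type*) [Fintype ι] (a b : ι → L)
    (R Rstar : L →ₗ[F] L)
    (hR : ∀ x : L, R x = ∑ i, ω (b i) x • a i)
    (hadj : ∀ x y : L, ω (R x) y = ω x (Rstar y))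
    (hCYBE : ∑ i, ∑ j, (⁅a i, a j⁆ ⊗ₜ[F] (b i ⊗ₜ[F] b j)
        - a i ⊗ₜ[F] (⁅a j, b i⁆ ⊗ₜ[F] b j)
        + a i ⊗ₜ[F] (a j ⊗ₜ[F] ⁅b i, b j⁆)) = (0 : L ⊗[F] (L ⊗[F] L))) :
    ∀ x y : L, ⁅Rstar x, Rstar y⁆ + Rstar ⁅x, R y⁆ - Rstar ⁅Rstar x, y⁆ = 0 := by
  intro x y
  -- explicit formula for Rstar
  have hRstar : ∀ w : L, Rstar w = ∑ i, ω (a i) w • b i := by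
    intro w
    have h : ∀ u : L, ω (Rstar w - ∑ i, ω (a i) w • b i) u = 0 := by
      intro u
      have h1 : ω (Rstar w) u = ω (R u) w := by
        rw [hsymm (Rstar w) u, ← hadj]
      rw [map_sub, LinearMap.sub_apply, h1, hR]
      simp only [map_sum, map_smul, LinearMap.sum_apply, LinearMap.smul_apply, smul_eq_mul]
      rw [sub_eq_zero]
      exact Finset.sum_congr rfl (fun i _ => mul_comm _ _)
    exact sub_eq_zero.mp (hnd.1 _ h)
  -- scalar form of the CYBE
  have key : ∀ z : L, ∑ i, ∑ j, (ω x ⁅a i, a j⁆ * (ω y (b i) * ω z (b j))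
      - ω x (a i) * (ω y ⁅a j, b i⁆ * ω z (b j))
      + ω x (a i) * (ω y (a j) * ω z ⁅b i, b j⁆)) = 0 := by
    intro z
    have := congrArg (fun t => (LinearMap.mul' F F ∘ₗ TensorProduct.map (ω x)
        (LinearMap.mul' F F ∘ₗ TensorProduct.map (ω y) (ω z))) t) hCYBE
    simpa [map_sum, map_sub, map_add] using this
  have lsum : ∀ (u : L) (f : ι → L), ⁅u, ∑ i, f i⁆ = ∑ i, ⁅u, f i⁆ := by
    intro u f
    exact map_sum (LieAlgebra.ad F L u) f Finset.univ
  have sumlie : ∀ (f : ι → L) (u : L), ⁅∑ i, f i, u⁆ = ∑ i, ⁅f i, u⁆ := by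
    intro f u
    rw [← lie_skew, lsum u f, ← Finset.sum_neg_distrib]
    exact Finset.sum_congr rfl (fun i _ => lie_skew _ _)
  apply hnd.1
  intro z
  have hA : ω ⁅Rstar x, Rstar y⁆ z
      = ∑ i, ∑ j, ω x (a i) * (ω y (a j) * ω z ⁅b i, b j⁆) := by
    rw [hRstar x, hRstar y]
    simp only [lsum, sumlie, lie_smul, smul_lie, map_sum, map_smul,
      LinearMap.sum_apply, LinearMap.smul_apply, smul_eq_mul, smul_smul]
    rw [Finset.sum_comm]
    refine Finset.sum_congr rfl (fun i _ => Finset.sum_congr rfl (fun j _ => ?_))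
    rw [hsymm (a i) x, hsymm (a j) y, hsymm ⁅b i, b j⁆ z]
    ring
  have hRs : ∀ w : L, ω (Rstar w) z = ∑ i, ω (b i) z * ω (a i) w := by
    intro w
    rw [hsymm (Rstar w) z, ← hadj, hR]
    simp only [map_sum, LinearMap.sum_apply, LinearMap.smul_apply, map_smul, smul_eq_mul]
  have hB : ω (Rstar ⁅x, R y⁆) z
      = ∑ i, ∑ j, ω x ⁅a j, a i⁆ * (ω y (b j) * ω z (b i)) := by
    rw [hRs]
    refine Finset.sum_congr rfl (fun i _ => ?_)
    rw [hR y]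
    simp only [lsum, lie_smul, map_sum, map_smul, smul_eq_mul, Finset.mul_sum]
    refine Finset.sum_congr rfl (fun j _ => ?_)
    have e1 : ω x ⁅a j, a i⁆ = ω (a i) ⁅x, a j⁆ := by
      rw [← hinv x (a j) (a i), hsymm ⁅x, a j⁆ (a i)]
    rw [e1, hsymm y (b j), hsymm z (b i)]
    ring
  have hC : ω (Rstar ⁅Rstar x, y⁆) z
      = ∑ i, ∑ j, ω x (a j) * (ω y ⁅a i, b j⁆ * ω z (b i)) := by
    rw [hRs, hRstar x]
    refine Finset.sum_congr rfl (fun i _ => ?_)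
    simp only [sumlie, smul_lie, map_sum, map_smul, smul_eq_mul, Finset.mul_sum]
    refine Finset.sum_congr rfl (fun j _ => ?_)
    have e1 : ω y ⁅a i, b j⁆ = ω (a i) ⁅b j, y⁆ := by
      rw [hsymm y ⁅a i, b j⁆, hinv]
    rw [e1, hsymm x (a j), hsymm z (b i)]
    ring
  have c1 : ∑ i, ∑ j, ω x ⁅a j, a i⁆ * (ω y (b j) * ω z (b i))
      = ∑ i, ∑ j, ω x ⁅a i, a j⁆ * (ω y (b i) * ω z (b j)) := Finset.sum_comm
  have c2 : ∑ i, ∑ j, ω x (a j) * (ω y ⁅a i, b j⁆ * ω z (b i))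
      = ∑ i, ∑ j, ω x (a i) * (ω y ⁅a j, b i⁆ * ω z (b j)) := Finset.sum_comm
  have k := key z
  simp only [Finset.sum_add_distrib, Finset.sum_sub_distrib] at k
  simp only [map_add, map_sub, LinearMap.add_apply, LinearMap.sub_apply]
  rw [hA, hB, hC, c1, c2]
  linear_combination k
end

section
/- The element r + τ(r) is L-invariant if and only if R + R* lies in the centroid of L, that is, [(R + R*)(x), y] = (R + R*)([x, y]) for all x, y ∈ L. -/
open TensorProduct

theorem my_sum_lie {ι L : Type*} [LieRing L] (s : Finset ι) (f : ι → L) (y : L) :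
    ⁅∑ i ∈ s, f i, y⁆ = ∑ i ∈ s, ⁅f i, y⁆ := by
  induction s using Finset.cons_induction with
  | empty => simp
  | cons i s hi ih => simp [Finset.sum_cons, add_lie, ih]

theorem stmt_2
    (F : Type*) [Field F] [CharZero F]
    (L : Type*) [LieRing L] [LieAlgebra F L] [FiniteDimensional F L]
    (ω : LinearMap.BilinForm F L)
    (hnd : ω.Nondegenerate)
    (hsymm : ∀ x y : L, ω x y = ω y x)
    (hinv : ∀ x y z : L, ω ⁅x, y⁆ z = ω x ⁅y, z⁆)
    (ι : Type*) [Fintype ι] (a b : ι → L)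
    (R Rstar : L →ₗ[F] L)
    (hR : ∀ x : L, R x = ∑ i, ω (b i) x • a i)
    (hadj : ∀ x y : L, ω (R x) y = ω x (Rstar y))
    : (∀ y : L, ∑ i, (⁅a i, y⁆ ⊗ₜ[F] b i + a i ⊗ₜ[F] ⁅b i, y⁆
        + ⁅b i, y⁆ ⊗ₜ[F] a i + b i ⊗ₜ[F] ⁅a i, y⁆) = (0 : L ⊗[F] L))
      ↔ (∀ x y : L, ⁅R x + Rstar x, y⁆ = R ⁅x, y⁆ + Rstar ⁅x, y⁆) := by
  classical
  -- Rstar explicitly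
  have hRstar : ∀ x : L, Rstar x = ∑ i, ω (a i) x • b i := by
    intro x
    apply sub_eq_zero.mp
    apply hnd.1
    intro u
    rw [hsymm]
    have h1 : ω u (Rstar x) = ω (R u) x := (hadj u x).symm
    rw [map_sub, sub_eq_zero, h1, hR u]
    simp only [map_sum, LinearMap.sum_apply, map_smul, LinearMap.smul_apply, smul_eq_mul]
    refine Finset.sum_congr rfl fun i _ => ?_
    rw [hsymm (b i) u, hsymm (a i) x]
    ring
  -- The injective map Φ : L ⊗ L ≃ End L
  let Φ : L ⊗[F] L ≃ₗ[F] (L →ₗ[F] L) :=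
    (TensorProduct.comm F L L) ≪≫ₗ
      TensorProduct.congr (ω.toDual hnd) (LinearEquiv.refl F L) ≪≫ₗ
      dualTensorHomEquivOfBasis (Module.finBasis F L)
  have hΦ : ∀ (u v x : L), Φ (u ⊗ₜ[F] v) x = ω v x • u := by
    intro u v x
    simp [Φ, dualTensorHomEquivOfBasis_apply, LinearMap.BilinForm.toDual_def]
  constructor
  · intro h x y
    have h2 := congrArg (fun t => Φ t x) (h y)
    simp only [map_sum, map_add, LinearMap.add_apply, LinearMap.sum_apply, map_zero,
      LinearMap.zero_apply, hΦ] at h2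
    have key : ∀ i,
        ω (b i) x • ⁅a i, y⁆ + ω ⁅b i, y⁆ x • a i + ω (a i) x • ⁅b i, y⁆
          + ω ⁅a i, y⁆ x • b i
        = (ω (b i) x • ⁅a i, y⁆ + ω (a i) x • ⁅b i, y⁆)
          + (ω (b i) ⁅y, x⁆ • a i + ω (a i) ⁅y, x⁆ • b i) := by
      intro i
      rw [hinv (b i) y x, hinv (a i) y x]
      abel
    rw [Finset.sum_congr rfl fun i _ => key i, Finset.sum_add_distrib] at h2
    have e1 : ∑ i, (ω (b i) x • ⁅a i, y⁆ + ω (a i) x • ⁅b i, y⁆)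
        = ⁅R x + Rstar x, y⁆ := by
      rw [hR, hRstar, ← Finset.sum_add_distrib, my_sum_lie]
      exact Finset.sum_congr rfl fun i _ => by rw [add_lie, smul_lie, smul_lie]
    have e2 : ∑ i, (ω (b i) ⁅y, x⁆ • a i + ω (a i) ⁅y, x⁆ • b i)
        = R ⁅y, x⁆ + Rstar ⁅y, x⁆ := by
      rw [hR, hRstar, Finset.sum_add_distrib]
    rw [e1, e2] at h2
    rw [← lie_skew x y, map_neg, map_neg, eq_neg_of_add_eq_zero_left h2, neg_add]
  · intro h y
    apply Φ.injective
    rw [map_zero]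
    ext x
    simp only [map_sum, map_add, LinearMap.add_apply, LinearMap.sum_apply,
      LinearMap.zero_apply, hΦ]
    have key : ∀ i,
        ω (b i) x • ⁅a i, y⁆ + ω ⁅b i, y⁆ x • a i + ω (a i) x • ⁅b i, y⁆
          + ω ⁅a i, y⁆ x • b i
        = (ω (b i) x • ⁅a i, y⁆ + ω (a i) x • ⁅b i, y⁆)
          + (ω (b i) ⁅y, x⁆ • a i + ω (a i) ⁅y, x⁆ • b i) := by
      intro i
      rw [hinv (b i) y x, hinv (a i) y x]
      abel
    rw [Finset.sum_congr rfl fun i _ => key i, Finset.sum_add_distrib]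
    have e1 : ∑ i, (ω (b i) x • ⁅a i, y⁆ + ω (a i) x • ⁅b i, y⁆)
        = ⁅R x + Rstar x, y⁆ := by
      rw [hR, hRstar, ← Finset.sum_add_distrib, my_sum_lie]
      exact Finset.sum_congr rfl fun i _ => by rw [add_lie, smul_lie, smul_lie]
    have e2 : ∑ i, (ω (b i) ⁅y, x⁆ • a i + ω (a i) ⁅y, x⁆ • b i)
        = R ⁅y, x⁆ + Rstar ⁅y, x⁆ := by
      rw [hR, hRstar, Finset.sum_add_distrib]
    rw [e1, e2, h x y, ← lie_skew y x, map_neg, map_neg]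
    abel
end

section
/- Suppose r is a solution of the classical Yang–Baxter equation on L. Then R is a Rota–Baxter operator of weight λ if and only if for all a, b ∈ L: R([R(a), b] + [R*(a), b] + λ[a, b]) = 0. -/
open TensorProduct

private lemma lie_sum_aux {L : Type*} [LieRing L]
    {ι : Type*} (s : Finset ι) (x : L) (f : ι → L) :
    ⁅x, ∑ i ∈ s, f i⁆ = ∑ i ∈ s, ⁅x, f i⁆ := by
  classical
  induction s using Finset.induction with
  | empty => simp
  | insert _ _ h ih => simp [Finset.sum_insert h, ih]

private lemma sum_lie_aux {L : Type*} [LieRing L]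
    {ι : Type*} (s : Finset ι) (x : L) (f : ι → L) :
    ⁅∑ i ∈ s, f i, x⁆ = ∑ i ∈ s, ⁅f i, x⁆ := by
  classical
  induction s using Finset.induction with
  | empty => simp
  | insert _ _ h ih => simp [Finset.sum_insert h, ih]

theorem stmt_3
    (F : Type*) [Field F] [CharZero F]
    (L : Type*) [LieRing L] [LieAlgebra F L] [FiniteDimensional F L]
    (ω : LinearMap.BilinForm F L)
    (hnd : ω.Nondegenerate)
    (hsymm : ∀ x y : L, ω x y = ω y x)
    (hinv : ∀ x y z : L, ω ⁅x, y⁆ z = ω x ⁅y, z⁆)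
    (ι : Type*) [Fintype ι] (a b : ι → L)
    (R Rstar : L →ₗ[F] L)
    (hR : ∀ x : L, R x = ∑ i, ω (b i) x • a i)
    (hadj : ∀ x y : L, ω (R x) y = ω x (Rstar y))
    (lam : F)
    (hCYBE : ∑ i, ∑ j, (⁅a i, a j⁆ ⊗ₜ[F] (b i ⊗ₜ[F] b j)
        - a i ⊗ₜ[F] (⁅a j, b i⁆ ⊗ₜ[F] b j)
        + a i ⊗ₜ[F] (a j ⊗ₜ[F] ⁅b i, b j⁆)) = (0 : L ⊗[F] (L ⊗[F] L))) :
    (∀ x y : L, ⁅R x, R y⁆ = R (⁅R x, y⁆ + ⁅x, R y⁆ + lam • ⁅x, y⁆))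
      ↔ (∀ x y : L, R (⁅R x, y⁆ + ⁅Rstar x, y⁆ + lam • ⁅x, y⁆) = 0) := by
  -- formula for Rstar
  have hRstar : ∀ x : L, Rstar x = ∑ j, ω (a j) x • b j := by
    intro x
    have h : ∀ z : L, ω (Rstar x - ∑ j, ω (a j) x • b j) z = 0 := by
      intro z
      have h1 : ω z (Rstar x) = ω (R z) x := (hadj z x).symm
      rw [map_sub, LinearMap.sub_apply, hsymm _ z, h1, hR z]
      simp only [map_sum, LinearMap.sum_apply, map_smul, LinearMap.smul_apply,
        smul_eq_mul]
      rw [sub_eq_zero]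
      exact Finset.sum_congr rfl fun j _ => by rw [hsymm (b j) z, mul_comm]
    have := hnd.1 _ h
    rw [sub_eq_zero] at this
    exact this
  -- key identity from CYBE
  have key : ∀ x y : L, ⁅R x, R y⁆ - R ⁅x, R y⁆ + R ⁅Rstar x, y⁆ = 0 := by
    intro x y
    let B : L →ₗ[F] L →ₗ[F] F := (LinearMap.mul F F).compl₁₂ (ω.flip x) (ω.flip y)
    let ψ : L ⊗[F] L →ₗ[F] F := TensorProduct.lift B
    let φ : L ⊗[F] (L ⊗[F] L) →ₗ[F] L :=
      (TensorProduct.rid F L).toLinearMap ∘ₗ LinearMap.lTensor L ψ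
    have hφ : ∀ t u v : L, φ (t ⊗ₜ (u ⊗ₜ v)) = (ω u x * ω v y) • t := by
      intro t u v; simp [φ, ψ, B]
    have h0 := congrArg φ hCYBE
    simp only [map_sum, map_sub, map_add, map_zero, hφ] at h0
    -- rewrite the three terms
    have E1 : ⁅R x, R y⁆ = ∑ i, ∑ j, (ω (b i) x * ω (b j) y) • ⁅a i, a j⁆ := by
      rw [hR x, hR y, sum_lie_aux]
      refine Finset.sum_congr rfl fun i _ => ?_
      rw [lie_sum_aux]
      refine Finset.sum_congr rfl fun j _ => ?_
      rw [smul_lie, lie_smul, smul_smul]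
    have E2 : R ⁅x, R y⁆ = ∑ i, ∑ j, (ω ⁅a j, b i⁆ x * ω (b j) y) • a i := by
      rw [hR ⁅x, R y⁆]
      refine Finset.sum_congr rfl fun i _ => ?_
      rw [hR y, lie_sum_aux, map_sum]
      rw [Finset.sum_smul]
      refine Finset.sum_congr rfl fun j _ => ?_
      rw [lie_smul, map_smul, smul_eq_mul]
      congr 1
      rw [← hinv (b i) x (a j), hsymm ⁅b i, x⁆ (a j), ← hinv (a j) (b i) x, mul_comm]
    have E3 : R ⁅Rstar x, y⁆ = ∑ i, ∑ j, (ω (a j) x * ω ⁅b i, b j⁆ y) • a i := by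
      rw [hR ⁅Rstar x, y⁆]
      refine Finset.sum_congr rfl fun i _ => ?_
      rw [hRstar x, sum_lie_aux, map_sum, Finset.sum_smul]
      refine Finset.sum_congr rfl fun j _ => ?_
      rw [smul_lie, map_smul, smul_eq_mul]
      congr 1
      rw [hinv (b i) (b j) y]
    rw [E1, E2, E3, ← Finset.sum_sub_distrib, ← Finset.sum_add_distrib]
    rw [← h0]
    refine Finset.sum_congr rfl fun i _ => ?_
    rw [← Finset.sum_sub_distrib, ← Finset.sum_add_distrib]
  constructor
  · intro hRB x y
    have h1 := key x y
    have h2 := hRB x y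
    rw [map_add, map_add, map_smul] at h2 ⊢
    have h3 : R ⁅Rstar x, y⁆ = R ⁅x, R y⁆ - ⁅R x, R y⁆ := by
      rw [← sub_eq_zero, ← h1]; abel
    rw [h3, h2]; abel
  · intro hZ x y
    have h2 := hZ x y
    have h1 := key x y
    rw [map_add, map_add, map_smul] at h2 ⊢
    have h3 : R ⁅Rstar x, y⁆ = R ⁅x, R y⁆ - ⁅R x, R y⁆ := by
      rw [← sub_eq_zero, ← h1]; abel
    rw [h3] at h2
    rw [← sub_eq_zero, ← neg_eq_zero, ← h2]
    abel
end

section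
/- Suppose R is a Rota–Baxter operator of weight λ on L. Then r is a solution of the classical Yang–Baxter equation on L if and only if for all a, b ∈ L: R([R(a), b] + [R*(a), b] + λ[a, b]) = 0. -/
open TensorProduct

theorem stmt_4
    (F : Type*) [Field F] [CharZero F]
    (L : Type*) [LieRing L] [LieAlgebra F L] [FiniteDimensional F L]
    (ω : LinearMap.BilinForm F L)
    (hnd : ω.Nondegenerate)
    (hsymm : ∀ x y : L, ω x y = ω y x)
    (hinv : ∀ x y z : L, ω ⁅x, y⁆ z = ω x ⁅y, z⁆)
    (ι : Type*) [Fintype ι] (a b : ι → L)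
    (R Rstar : L →ₗ[F] L)
    (hR : ∀ x : L, R x = ∑ i, ω (b i) x • a i)
    (hadj : ∀ x y : L, ω (R x) y = ω x (Rstar y))
    (lam : F)
    (hRB : ∀ x y : L, ⁅R x, R y⁆ = R (⁅R x, y⁆ + ⁅x, R y⁆ + lam • ⁅x, y⁆)) :
    (∑ i, ∑ j, (⁅a i, a j⁆ ⊗ₜ[F] (b i ⊗ₜ[F] b j)
        - a i ⊗ₜ[F] (⁅a j, b i⁆ ⊗ₜ[F] b j)
        + a i ⊗ₜ[F] (a j ⊗ₜ[F] ⁅b i, b j⁆)) = (0 : L ⊗[F] (L ⊗[F] L)))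
      ↔ (∀ x y : L, R (⁅R x, y⁆ + ⁅Rstar x, y⁆ + lam • ⁅x, y⁆) = 0) := by
  classical
  -- sums and brackets commute
  have sum_lie' : ∀ (f : ι → L) (z : L), ⁅∑ i, f i, z⁆ = ∑ i, ⁅f i, z⁆ := by
    intro f z
    induction (Finset.univ : Finset ι) using Finset.induction with
    | empty => simp
    | insert _ _ h ih => simp [Finset.sum_insert h, add_lie, ih]
  have lie_sum' : ∀ (z : L) (f : ι → L), ⁅z, ∑ i, f i⁆ = ∑ i, ⁅z, f i⁆ := by
    intro z f
    induction (Finset.univ : Finset ι) using Finset.induction with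
    | empty => simp
    | insert _ _ h ih => simp [Finset.sum_insert h, lie_add, ih]
  -- the duality equivalence induced by ω
  set e : L ≃ₗ[F] Module.Dual F L := ω.toDual hnd with he
  set D : (L ⊗[F] L) ≃ₗ[F] Module.Dual F (L ⊗[F] L) :=
    (TensorProduct.congr e e).trans (TensorProduct.dualDistribEquiv F L L) with hD
  set E : (L ⊗[F] (L ⊗[F] L)) ≃ₗ[F] ((L ⊗[F] L) →ₗ[F] L) :=
    (TensorProduct.comm F L (L ⊗[F] L)).trans
      (((TensorProduct.congr D (LinearEquiv.refl F L)).trans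
        (dualTensorHomEquiv F (L ⊗[F] L) L))) with hE
  have hEapp : ∀ u v w x y : L,
      E (u ⊗ₜ[F] (v ⊗ₜ[F] w)) (x ⊗ₜ[F] y) = (ω v x * ω w y) • u := by
    intro u v w x y
    simp [hE, hD, he, TensorProduct.dualDistribEquiv, LinearMap.BilinForm.toDual_def]
  -- formula for Rstar
  have hRstar : ∀ x : L, Rstar x = ∑ j, ω (a j) x • b j := by
    intro x
    have key : ∀ w : L, ω (Rstar x - ∑ j, ω (a j) x • b j) w = 0 := by
      intro w
      rw [hsymm, map_sub, sub_eq_zero, ← hadj w x, hR w]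
      simp only [map_sum, map_smul, LinearMap.sum_apply, LinearMap.smul_apply,
        smul_eq_mul, Finset.sum_apply]
      refine Finset.sum_congr rfl fun j _ => ?_
      rw [hsymm w (b j)]; ring
    exact sub_eq_zero.mp (hnd.1 _ key)
  -- the pointwise value of E applied to the CYBE tensor
  have hcomp : ∀ x y : L,
      (∑ i, ∑ j, ((ω (b i) x * ω (b j) y) • ⁅a i, a j⁆
          - (ω ⁅a j, b i⁆ x * ω (b j) y) • a i
          + (ω (a j) x * ω ⁅b i, b j⁆ y) • a i))
        = R (⁅R x, y⁆ + ⁅Rstar x, y⁆ + lam • ⁅x, y⁆) := by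
    intro x y
    have S1 : (∑ i, ∑ j, (ω (b i) x * ω (b j) y) • ⁅a i, a j⁆) = ⁅R x, R y⁆ := by
      rw [hR x, hR y, sum_lie']
      refine Finset.sum_congr rfl fun i _ => ?_
      rw [lie_sum']
      refine Finset.sum_congr rfl fun j _ => ?_
      rw [smul_lie, lie_smul, smul_smul]
    have S2 : (∑ i, ∑ j, (ω ⁅a j, b i⁆ x * ω (b j) y) • a i) = R ⁅x, R y⁆ := by
      rw [hR ⁅x, R y⁆]
      refine Finset.sum_congr rfl fun i _ => ?_
      have inner : (∑ j, ω ⁅a j, b i⁆ x * ω (b j) y) = ω (b i) ⁅x, R y⁆ := by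
        have h1 : ω (b i) ⁅x, R y⁆ = ω ⁅b i, x⁆ (R y) := (hinv (b i) x (R y)).symm
        have h2 : ω ⁅b i, x⁆ (R y) = ω (R y) ⁅b i, x⁆ := hsymm _ _
        rw [h1, h2, hR y]
        simp only [map_sum, map_smul, LinearMap.sum_apply, LinearMap.smul_apply,
          smul_eq_mul, Finset.sum_apply]
        refine Finset.sum_congr rfl fun j _ => ?_
        rw [hinv (a j) (b i) x]; ring
      rw [← inner, Finset.sum_smul]
    have S3 : (∑ i, ∑ j, (ω (a j) x * ω ⁅b i, b j⁆ y) • a i) = R ⁅Rstar x, y⁆ := by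
      rw [hR ⁅Rstar x, y⁆]
      refine Finset.sum_congr rfl fun i _ => ?_
      have inner : (∑ j, ω (a j) x * ω ⁅b i, b j⁆ y) = ω (b i) ⁅Rstar x, y⁆ := by
        rw [hRstar x, sum_lie', map_sum]
        refine Finset.sum_congr rfl fun j _ => ?_
        rw [smul_lie, map_smul, smul_eq_mul, ← hinv (b i) (b j) y]
      rw [← inner, Finset.sum_smul]
    calc (∑ i, ∑ j, ((ω (b i) x * ω (b j) y) • ⁅a i, a j⁆
          - (ω ⁅a j, b i⁆ x * ω (b j) y) • a i
          + (ω (a j) x * ω ⁅b i, b j⁆ y) • a i))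
        = (∑ i, ∑ j, (ω (b i) x * ω (b j) y) • ⁅a i, a j⁆)
          - (∑ i, ∑ j, (ω ⁅a j, b i⁆ x * ω (b j) y) • a i)
          + (∑ i, ∑ j, (ω (a j) x * ω ⁅b i, b j⁆ y) • a i) := by
          simp [Finset.sum_add_distrib, Finset.sum_sub_distrib]
      _ = ⁅R x, R y⁆ - R ⁅x, R y⁆ + R ⁅Rstar x, y⁆ := by rw [S1, S2, S3]
      _ = R (⁅R x, y⁆ + ⁅Rstar x, y⁆ + lam • ⁅x, y⁆) := by
          rw [hRB x y]
          simp only [map_add, map_smul]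
          abel
  -- put things together
  constructor
  · intro hT x y
    have h0 := congrArg (fun t => E t (x ⊗ₜ[F] y)) hT
    simp only [map_zero, LinearMap.zero_apply] at h0
    simp only [map_sum, LinearMap.sum_apply, map_sub, map_add, LinearMap.sub_apply,
      LinearMap.add_apply, hEapp] at h0
    rw [← hcomp x y]
    exact h0
  · intro h
    have hmap : E (∑ i, ∑ j, (⁅a i, a j⁆ ⊗ₜ[F] (b i ⊗ₜ[F] b j)
        - a i ⊗ₜ[F] (⁅a j, b i⁆ ⊗ₜ[F] b j)
        + a i ⊗ₜ[F] (a j ⊗ₜ[F] ⁅b i, b j⁆))) = 0 := by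
      apply TensorProduct.ext'
      intro x y
      simp only [map_sum, LinearMap.sum_apply, map_sub, map_add, LinearMap.sub_apply,
        LinearMap.add_apply, hEapp, LinearMap.zero_apply]
      exact (hcomp x y).trans (h x y)
    exact E.map_eq_zero_iff.mp hmap
end

section
/- Suppose r is a solution of the classical Yang–Baxter equation on L. Then R* is a Rota–Baxter operator of weight λ if and only if for all a, b ∈ L: R*([R(a), b] + [R*(a), b] + λ[a, b]) = 0. -/
open TensorProduct

theorem stmt_5
    (F : Type*) [Field F] [CharZero F]
    (L : Type*) [LieRing L] [LieAlgebra F L] [FiniteDimensional F L]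
    (ω : LinearMap.BilinForm F L)
    (hnd : ω.Nondegenerate)
    (hsymm : ∀ x y : L, ω x y = ω y x)
    (hinv : ∀ x y z : L, ω ⁅x, y⁆ z = ω x ⁅y, z⁆)
    (ι : Type*) [Fintype ι] (a b : ι → L)
    (R Rstar : L →ₗ[F] L)
    (hR : ∀ x : L, R x = ∑ i, ω (b i) x • a i)
    (hadj : ∀ x y : L, ω (R x) y = ω x (Rstar y))
    (lam : F)
    (hCYBE : ∑ i, ∑ j, (⁅a i, a j⁆ ⊗ₜ[F] (b i ⊗ₜ[F] b j)
        - a i ⊗ₜ[F] (⁅a j, b i⁆ ⊗ₜ[F] b j)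
        + a i ⊗ₜ[F] (a j ⊗ₜ[F] ⁅b i, b j⁆)) = (0 : L ⊗[F] (L ⊗[F] L))) :
    (∀ x y : L, ⁅Rstar x, Rstar y⁆ = Rstar (⁅Rstar x, y⁆ + ⁅x, Rstar y⁆ + lam • ⁅x, y⁆))
      ↔ (∀ x y : L, Rstar (⁅R x, y⁆ + ⁅Rstar x, y⁆ + lam • ⁅x, y⁆) = 0) := by
  classical
  -- bracket-sum helpers
  have lsum : ∀ (z : L) (f : ι → L), ⁅z, ∑ i, f i⁆ = ∑ i, ⁅z, f i⁆ := by
    intro z f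
    exact map_sum (LieAlgebra.ad F L z) f Finset.univ
  have sums : ∀ (z : L) (f : ι → L), ⁅∑ i, f i, z⁆ = ∑ i, ⁅f i, z⁆ := by
    intro z f
    have sk0 : ∀ u v : L, ⁅u, v⁆ = -⁅v, u⁆ := fun u v => (lie_skew u v).symm
    rw [sk0, lsum, ← Finset.sum_neg_distrib]
    exact Finset.sum_congr rfl fun i _ => (sk0 (f i) z).symm
  have sk : ∀ u v : L, ⁅u, v⁆ = -⁅v, u⁆ := fun u v => (lie_skew u v).symm
  -- explicit formula for Rstar
  have hRstar : ∀ y : L, Rstar y = ∑ i, ω (a i) y • b i := by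
    intro y
    have h : ∀ x : L, ω (Rstar y - ∑ i, ω (a i) y • b i) x = 0 := by
      intro x
      rw [map_sub, LinearMap.sub_apply]
      have h1 : ω (Rstar y) x = ω (R x) y := by
        rw [hadj x y, hsymm]
      rw [h1, hR]
      simp only [map_sum, map_smul, LinearMap.sum_apply, LinearMap.smul_apply, smul_eq_mul]
      rw [sub_eq_zero]
      exact Finset.sum_congr rfl fun i _ => mul_comm _ _
    exact sub_eq_zero.mp (hnd.1 _ h)
  -- the key identity derived from CYBE
  have key : ∀ x y : L,
      Rstar ⁅x, R y⁆ - Rstar ⁅Rstar x, y⁆ + ⁅Rstar x, Rstar y⁆ = 0 := by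
    intro x y
    set φ : L ⊗[F] (L ⊗[F] L) →ₗ[F] L :=
      (TensorProduct.lid F L).toLinearMap.comp (TensorProduct.map (ω x)
        ((TensorProduct.lid F L).toLinearMap.comp
          (TensorProduct.map (ω y) LinearMap.id))) with hφ
    have hφt : ∀ u v w : L, φ (u ⊗ₜ[F] (v ⊗ₜ[F] w)) = ω x u • (ω y v • w) := by
      intro u v w
      simp [hφ]
      rw [smul_comm]
    have h0 := congrArg φ hCYBE
    rw [map_zero] at h0
    simp only [map_sum, map_add, map_sub, hφt] at h0
    rw [Finset.sum_congr rfl (fun i (_ : i ∈ Finset.univ) => Finset.sum_add_distrib),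
      Finset.sum_congr rfl (fun i (_ : i ∈ Finset.univ) =>
        congrArg₂ (· + ·) (Finset.sum_sub_distrib _ _) rfl),
      Finset.sum_add_distrib, Finset.sum_sub_distrib] at h0
    -- identify the three double sums
    have e1 : Rstar ⁅x, R y⁆ = ∑ i, ∑ j, ω x ⁅a i, a j⁆ • (ω y (b i) • b j) := by
      rw [hRstar, hR, Finset.sum_comm]
      refine Finset.sum_congr rfl (fun j _ => ?_)
      rw [lsum]
      simp only [map_sum, lie_smul, map_smul, smul_eq_mul, Finset.sum_smul]
      refine Finset.sum_congr rfl (fun i _ => ?_)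
      simp only [smul_smul]
      congr 1
      rw [← hinv x (a i) (a j), hsymm ⁅x, a i⁆ (a j), hsymm y (b i)]
      ring
    have e2 : Rstar ⁅Rstar x, y⁆ = ∑ i, ∑ j, ω x (a i) • (ω y ⁅a j, b i⁆ • b j) := by
      rw [hRstar, hRstar x, Finset.sum_comm]
      refine Finset.sum_congr rfl (fun j _ => ?_)
      rw [sums]
      simp only [map_sum, smul_lie, map_smul, smul_eq_mul, Finset.sum_smul]
      refine Finset.sum_congr rfl (fun i _ => ?_)
      simp only [smul_smul]
      congr 1
      rw [← hinv (a j) (b i) y, hsymm x (a i), hsymm y ⁅a j, b i⁆]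
    have e3 : ⁅Rstar x, Rstar y⁆ = ∑ i, ∑ j, ω x (a i) • (ω y (a j) • ⁅b i, b j⁆) := by
      rw [hRstar x, hRstar y, sums]
      refine Finset.sum_congr rfl (fun i _ => ?_)
      rw [smul_lie, lsum, Finset.smul_sum]
      refine Finset.sum_congr rfl (fun j _ => ?_)
      rw [lie_smul, hsymm x (a i), hsymm y (a j)]
    rw [e1, e2, e3]
    exact h0
  constructor
  · intro hRB x y
    have k := key y x
    rw [hRB y x] at k
    have harg : (⁅R x, y⁆ + ⁅Rstar x, y⁆ + lam • ⁅x, y⁆ : L)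
        = -(⁅y, R x⁆ + ⁅y, Rstar x⁆ + lam • ⁅y, x⁆) := by
      rw [sk (R x) y, sk (Rstar x) y, sk x y, smul_neg]
      abel
    rw [harg, map_neg, neg_eq_zero]
    simp only [map_add, map_smul] at k ⊢
    rw [← k]
    abel
  · intro hz x y
    have k := key x y
    have h := hz y x
    rw [sk (R y) x, sk (Rstar y) x, sk y x, smul_neg] at h
    simp only [map_add, map_neg, map_smul] at h k ⊢
    rw [← sub_eq_zero, ← h]
    have k' : ⁅Rstar x, Rstar y⁆ = Rstar ⁅Rstar x, y⁆ - Rstar ⁅x, R y⁆ := by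
      rw [← sub_eq_zero, ← k]
      abel
    rw [k']
    abel
end

section
/- Suppose R is a Rota–Baxter operator of nonzero weight λ on L and for all a ∈ L the element R(a) + R*(a) + λa lies in the center Z(L) of L. Then r is a solution of the classical Yang–Baxter equation on L. -/
open TensorProduct

theorem stmt_6
    (F : Type*) [Field F] [CharZero F]
    (L : Type*) [LieRing L] [LieAlgebra F L] [FiniteDimensional F L]
    (ω : LinearMap.BilinForm F L)
    (hnd : ω.Nondegenerate)
    (hsymm : ∀ x y : L, ω x y = ω y x)
    (hinv : ∀ x y z : L, ω ⁅x, y⁆ z = ω x ⁅y, z⁆)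
    (ι : Type*) [Fintype ι] (a b : ι → L)
    (R Rstar : L →ₗ[F] L)
    (hR : ∀ x : L, R x = ∑ i, ω (b i) x • a i)
    (hadj : ∀ x y : L, ω (R x) y = ω x (Rstar y))
    (lam : F) (hlam : lam ≠ 0)
    (hRB : ∀ x y : L, ⁅R x, R y⁆ = R (⁅R x, y⁆ + ⁅x, R y⁆ + lam • ⁅x, y⁆))
    (hcen : ∀ x : L, R x + Rstar x + lam • x ∈ LieAlgebra.center F L) :
    ∑ i, ∑ j, (⁅a i, a j⁆ ⊗ₜ[F] (b i ⊗ₜ[F] b j)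
        - a i ⊗ₜ[F] (⁅a j, b i⁆ ⊗ₜ[F] b j)
        + a i ⊗ₜ[F] (a j ⊗ₜ[F] ⁅b i, b j⁆)) = (0 : L ⊗[F] (L ⊗[F] L)) := by
  classical
  have sum_lie : ∀ (f : ι → L) (y : L), ⁅(∑ i, f i), y⁆ = ∑ i, ⁅f i, y⁆ := fun f y =>
    map_sum (AddMonoidHom.mk' (fun x => ⁅x, y⁆) fun a c => add_lie a c y) f Finset.univ
  have lie_sum : ∀ (x : L) (f : ι → L), ⁅x, ∑ i, f i⁆ = ∑ i, ⁅x, f i⁆ := fun x f =>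
    map_sum (AddMonoidHom.mk' (fun u => ⁅x, u⁆) fun a c => lie_add x a c) f Finset.univ
  -- center facts
  have hZ : ∀ p u : L, ⁅u, R p + Rstar p + lam • p⁆ = 0 := by
    intro p u
    exact (LieModule.mem_maxTrivSubmodule F L L _).mp (hcen p) u
  have hZ' : ∀ p u : L, ⁅R p + Rstar p + lam • p, u⁆ = 0 := by
    intro p u
    rw [← lie_skew, hZ, neg_zero]
  -- scalar consequences of centrality
  have hc1 : ∀ p u w : L,
      ω ⁅u, R p⁆ w + ω ⁅u, Rstar p⁆ w + lam * ω ⁅u, p⁆ w = 0 := by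
    intro p u w
    have h := hZ p u
    rw [lie_add, lie_add, lie_smul] at h
    have h2 := congrArg (fun v => ω v w) h
    simpa [map_add, map_smul, smul_eq_mul] using h2
  have hc2 : ∀ p u w : L,
      ω ⁅R p, u⁆ w + ω ⁅Rstar p, u⁆ w + lam * ω ⁅p, u⁆ w = 0 := by
    intro p u w
    have h := hZ' p u
    rw [add_lie, add_lie, smul_lie] at h
    have h2 := congrArg (fun v => ω v w) h
    simpa [map_add, map_smul, smul_eq_mul] using h2
  -- pairing of a bracket against R w + Rstar w + lam w vanishes
  have hSpair : ∀ p q w : L,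
      ω ⁅p, q⁆ (R w) + ω ⁅p, q⁆ (Rstar w) + lam * ω ⁅p, q⁆ w = 0 := by
    intro p q w
    have h0 : ω ⁅p, q⁆ (R w + Rstar w + lam • w) = 0 := by
      rw [hinv, hZ w q, map_zero]
    simpa [map_add, map_smul, smul_eq_mul] using h0
  -- cyclicity
  have hcyc : ∀ p q r : L, ω ⁅p, q⁆ r = ω ⁅q, r⁆ p := by
    intro p q r
    rw [hinv]
    exact hsymm _ _
  -- the key scalar identity E(x,y,z) = 0
  have hE : ∀ x y z : L,
      ω ⁅R y, R z⁆ x - ω ⁅R z, Rstar x⁆ y + ω ⁅Rstar x, Rstar y⁆ z = 0 := by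
    intro x y z
    have h1 : ω ⁅R z, Rstar x⁆ y = -ω ⁅R z, R x⁆ y - lam * ω ⁅R z, x⁆ y := by
      linear_combination hc1 x (R z) y
    have h2 : ω ⁅Rstar x, Rstar y⁆ z
        = ω ⁅R x, R y⁆ z + lam * ω ⁅R x, y⁆ z + lam * ω ⁅x, R y⁆ z
          + lam ^ 2 * ω ⁅x, y⁆ z := by
      linear_combination hc2 x (Rstar y) z - hc1 y (R x) z - lam * hc1 y x z
    have s1 : ω ⁅R x, R y⁆ z
        = ω (⁅R x, y⁆ + ⁅x, R y⁆ + lam • ⁅x, y⁆) (Rstar z) := by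
      rw [hRB x y]; exact hadj _ z
    have s2 : ω (⁅R x, y⁆ + ⁅x, R y⁆ + lam • ⁅x, y⁆) (Rstar z)
        = ω ⁅R x, y⁆ (Rstar z) + ω ⁅x, R y⁆ (Rstar z)
          + lam * ω ⁅x, y⁆ (Rstar z) := by
      simp [map_add, map_smul, smul_eq_mul]
    have h3 : ω ⁅R x, R y⁆ z
        = -ω ⁅R x, y⁆ (R z) - ω ⁅x, R y⁆ (R z) - lam * ω ⁅x, y⁆ (R z)
          - lam * ω ⁅R x, y⁆ z - lam * ω ⁅x, R y⁆ z - lam ^ 2 * ω ⁅x, y⁆ z := by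
      have e1 := hSpair (R x) y z
      have e2 := hSpair x (R y) z
      have e3 := hSpair x y z
      linear_combination s1 + s2 + e1 + e2 + lam * e3
    have h4 : ω ⁅R y, R z⁆ x = ω ⁅x, R y⁆ (R z) :=
      (hcyc (R y) (R z) x).trans (hcyc (R z) x (R y))
    have h5 : ω ⁅R z, R x⁆ y = ω ⁅R x, y⁆ (R z) := hcyc (R z) (R x) y
    have h6 : ω ⁅R z, x⁆ y = ω ⁅x, y⁆ (R z) := hcyc (R z) x y
    linear_combination h4 - h1 + h2 + h3 + h5 + lam * h6
  -- formula for Rstar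
  have hRs : ∀ x : L, Rstar x = ∑ i, ω (a i) x • b i := by
    intro x
    have key : ∀ n : L, ω (Rstar x - ∑ i, ω (a i) x • b i) n = 0 := by
      intro n
      have h1 : ω (Rstar x) n = ω (R n) x := by
        rw [hsymm]; exact (hadj n x).symm
      have h2 : ω (R n) x = ∑ i, ω (b i) n * ω (a i) x := by
        rw [hR n]
        simp [map_sum, map_smul, smul_eq_mul, LinearMap.sum_apply]
      have h3 : ω (∑ i, ω (a i) x • b i) n = ∑ i, ω (a i) x * ω (b i) n := by
        simp [map_sum, map_smul, smul_eq_mul, LinearMap.sum_apply]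
      have : ω (Rstar x - ∑ i, ω (a i) x • b i) n
          = ω (Rstar x) n - ω (∑ i, ω (a i) x • b i) n := by
        simp [map_sub]
      rw [this, h1, h2, h3]
      rw [← Finset.sum_sub_distrib]
      · apply Finset.sum_eq_zero
        intro i _
        ring
    have := hnd.1 _ key
    exact sub_eq_zero.mp this
  -- the three double sums as bracket pairings
  have hsum1 : ∀ x y z : L,
      ∑ i, ∑ j, ω ⁅a i, a j⁆ x * (ω (b i) y * ω (b j) z) = ω ⁅R y, R z⁆ x := by
    intro x y z
    rw [hR y, hR z]
    rw [sum_lie]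
    simp only [map_sum, LinearMap.sum_apply]
    refine Finset.sum_congr rfl fun i _ => ?_
    rw [lie_sum]
    simp only [map_sum, LinearMap.sum_apply, smul_lie, lie_smul, map_smul,
      LinearMap.smul_apply, smul_eq_mul]
    refine Finset.sum_congr rfl fun j _ => ?_
    ring
  have hsum2 : ∀ x y z : L,
      ∑ i, ∑ j, ω (a i) x * (ω ⁅a j, b i⁆ y * ω (b j) z)
        = ω ⁅R z, Rstar x⁆ y := by
    intro x y z
    rw [hR z, hRs x]
    rw [sum_lie]
    simp only [map_sum, LinearMap.sum_apply]
    rw [Finset.sum_comm]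
    refine Finset.sum_congr rfl fun i _ => ?_
    rw [lie_sum]
    simp only [map_sum, LinearMap.sum_apply, smul_lie, lie_smul, map_smul,
      LinearMap.smul_apply, smul_eq_mul]
    refine Finset.sum_congr rfl fun j _ => ?_
    ring
  have hsum3 : ∀ x y z : L,
      ∑ i, ∑ j, ω (a i) x * (ω (a j) y * ω ⁅b i, b j⁆ z)
        = ω ⁅Rstar x, Rstar y⁆ z := by
    intro x y z
    rw [hRs x, hRs y]
    rw [sum_lie]
    simp only [map_sum, LinearMap.sum_apply]
    refine Finset.sum_congr rfl fun i _ => ?_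
    rw [lie_sum]
    simp only [map_sum, LinearMap.sum_apply, smul_lie, lie_smul, map_smul,
      LinearMap.smul_apply, smul_eq_mul]
    refine Finset.sum_congr rfl fun j _ => ?_
    ring
  -- the equivalence to the dual space
  let e : L ≃ₗ[F] Module.Dual F L := ω.toDual hnd
  let Φ : L ⊗[F] (L ⊗[F] L) ≃ₗ[F] Module.Dual F (L ⊗[F] (L ⊗[F] L)) :=
    (TensorProduct.congr e (TensorProduct.congr e e)).trans
      ((TensorProduct.congr (LinearEquiv.refl F (Module.Dual F L))
          (TensorProduct.dualDistribEquiv F L L)).trans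
        (TensorProduct.dualDistribEquiv F L (L ⊗[F] L)))
  have keyΦ : ∀ p q s x y z : L,
      Φ (p ⊗ₜ[F] (q ⊗ₜ[F] s)) (x ⊗ₜ[F] (y ⊗ₜ[F] z))
        = ω p x * (ω q y * ω s z) := by
    intro p q s x y z
    simp only [Φ, e, LinearEquiv.trans_apply, TensorProduct.congr_tmul,
      LinearEquiv.refl_apply, TensorProduct.dualDistribEquiv,
      TensorProduct.dualDistribEquivOfBasis, LinearEquiv.ofLinear_apply,
      TensorProduct.dualDistrib_apply]
    rfl
  suffices hΦ : Φ (∑ i, ∑ j, (⁅a i, a j⁆ ⊗ₜ[F] (b i ⊗ₜ[F] b j)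
        - a i ⊗ₜ[F] (⁅a j, b i⁆ ⊗ₜ[F] b j)
        + a i ⊗ₜ[F] (a j ⊗ₜ[F] ⁅b i, b j⁆))) = 0 by
    exact Φ.map_eq_zero_iff.mp hΦ
  -- show the functional vanishes on pure tensors
  have hpt : ∀ x y z : L,
      Φ (∑ i, ∑ j, (⁅a i, a j⁆ ⊗ₜ[F] (b i ⊗ₜ[F] b j)
        - a i ⊗ₜ[F] (⁅a j, b i⁆ ⊗ₜ[F] b j)
        + a i ⊗ₜ[F] (a j ⊗ₜ[F] ⁅b i, b j⁆))) (x ⊗ₜ[F] (y ⊗ₜ[F] z)) = 0 := by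
    intro x y z
    rw [map_sum]
    simp only [map_sum, map_add, map_sub, LinearMap.sum_apply,
      LinearMap.add_apply, LinearMap.sub_apply, keyΦ]
    have : ∑ i, ∑ j, (ω ⁅a i, a j⁆ x * (ω (b i) y * ω (b j) z)
        - ω (a i) x * (ω ⁅a j, b i⁆ y * ω (b j) z)
        + ω (a i) x * (ω (a j) y * ω ⁅b i, b j⁆ z))
        = ω ⁅R y, R z⁆ x - ω ⁅R z, Rstar x⁆ y + ω ⁅Rstar x, Rstar y⁆ z := by
      rw [← hsum1 x y z, ← hsum2 x y z, ← hsum3 x y z]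
      rw [← Finset.sum_sub_distrib, ← Finset.sum_add_distrib]
      refine Finset.sum_congr rfl fun i _ => ?_
      rw [← Finset.sum_sub_distrib, ← Finset.sum_add_distrib]
    rw [this, hE x y z]
  -- conclude Φ t = 0 by extensionality
  apply LinearMap.ext_iff.mpr
  intro s
  induction s using TensorProduct.induction_on with
  | zero => simp
  | tmul x w =>
    induction w using TensorProduct.induction_on with
    | zero => simp
    | tmul y z => simpa using hpt x y z
    | add w1 w2 ih1 ih2 =>
      rw [TensorProduct.tmul_add, map_add]
      simp only [LinearMap.zero_apply] at *
      rw [ih1, ih2, add_zero]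
  | add s1 s2 ih1 ih2 =>
    rw [map_add]
    simp only [LinearMap.zero_apply] at *
    rw [ih1, ih2, add_zero]
end

section
/- Suppose r is a solution of the classical Yang–Baxter equation on L and r + τ(r) is L-invariant. Then for every λ ∈ F, the image I_λ = θ_λ([L, L]) of the commutator ideal [L, L] under θ_λ = R + R* + λ·id is a Lie ideal of L. -/
open TensorProduct

theorem stmt_7
    (F : Type*) [Field F] [CharZero F]
    (L : Type*) [LieRing L] [LieAlgebra F L] [FiniteDimensional F L]
    (ω : LinearMap.BilinForm F L)
    (hnd : ω.Nondegenerate)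
    (hsymm : ∀ x y : L, ω x y = ω y x)
    (hinv : ∀ x y z : L, ω ⁅x, y⁆ z = ω x ⁅y, z⁆)
    (ι : Type*) [Fintype ι] (a b : ι → L)
    (R Rstar : L →ₗ[F] L)
    (hR : ∀ x : L, R x = ∑ i, ω (b i) x • a i)
    (hadj : ∀ x y : L, ω (R x) y = ω x (Rstar y))
    (hCYBE : ∑ i, ∑ j, (⁅a i, a j⁆ ⊗ₜ[F] (b i ⊗ₜ[F] b j)
        - a i ⊗ₜ[F] (⁅a j, b i⁆ ⊗ₜ[F] b j)
        + a i ⊗ₜ[F] (a j ⊗ₜ[F] ⁅b i, b j⁆)) = (0 : L ⊗[F] (L ⊗[F] L)))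
    (hinvr : ∀ y : L, ∑ i, (⁅a i, y⁆ ⊗ₜ[F] b i + a i ⊗ₜ[F] ⁅b i, y⁆
        + ⁅b i, y⁆ ⊗ₜ[F] a i + b i ⊗ₜ[F] ⁅a i, y⁆) = (0 : L ⊗[F] L)) :
    ∀ lam : F, ∃ J : LieIdeal F L,
      J.toSubmodule = Submodule.map (R + Rstar + lam • LinearMap.id)
        (⁅(⊤ : LieIdeal F L), (⊤ : LieIdeal F L)⁆ : LieIdeal F L).toSubmodule := by
  intro lam
  -- formula for Rstar
  have hRs : ∀ x : L, Rstar x = ∑ i, ω (a i) x • b i := by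
    intro x
    have key : ∀ z : L, ω (Rstar x - ∑ i, ω (a i) x • b i) z = 0 := by
      intro z
      rw [map_sub, LinearMap.sub_apply, sub_eq_zero, hsymm, ← hadj, hR]
      simp only [map_sum, map_smul, LinearMap.sum_apply, LinearMap.smul_apply,
        smul_eq_mul]
      refine Finset.sum_congr rfl fun i _ => ?_
      rw [hsymm (b i) z, mul_comm]
    exact sub_eq_zero.mp (hnd.1 _ key)
  -- equivariance of R + Rstar
  have heq : ∀ (y x : L), (R + Rstar) ⁅y, x⁆ = ⁅y, (R + Rstar) x⁆ := by
    intro y x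
    -- the bilinear contraction map
    let f : L →ₗ[F] L →ₗ[F] L := LinearMap.mk₂ F (fun u v => ω v x • u)
      (fun u₁ u₂ v => smul_add _ _ _)
      (fun c u v => smul_comm _ _ _)
      (fun u v₁ v₂ => by simp [add_smul])
      (fun c u v => by simp [mul_smul])
    let φ : L ⊗[F] L →ₗ[F] L := TensorProduct.lift f
    have h0 := congrArg φ (hinvr y)
    rw [map_sum, map_zero] at h0
    simp only [map_add, φ, TensorProduct.lift.tmul, LinearMap.mk₂_apply, f] at h0
    have hsum : (∑ i, ω (b i) x • ⁅a i, y⁆) + (∑ i, ω (b i) ⁅y, x⁆ • a i)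
        + (∑ i, ω (a i) x • ⁅b i, y⁆) + (∑ i, ω (a i) ⁅y, x⁆ • b i) = 0 := by
      rw [← h0, ← Finset.sum_add_distrib, ← Finset.sum_add_distrib,
        ← Finset.sum_add_distrib]
      exact Finset.sum_congr rfl fun i _ => by rw [hinv (b i) y x, hinv (a i) y x]
    have hA : (R + Rstar) ⁅y, x⁆
        = (∑ i, ω (b i) ⁅y, x⁆ • a i) + (∑ i, ω (a i) ⁅y, x⁆ • b i) := by
      rw [LinearMap.add_apply, hR, hRs]
    have hB : ⁅y, (R + Rstar) x⁆
        = -((∑ i, ω (b i) x • ⁅a i, y⁆) + (∑ i, ω (a i) x • ⁅b i, y⁆)) := by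
      have hlie : ∀ (g : ι → L), ⁅y, ∑ i, g i⁆ = ∑ i, ⁅y, g i⁆ := fun g => by
        rw [← LieAlgebra.ad_apply (R := F), map_sum]; simp [LieAlgebra.ad_apply]
      rw [LinearMap.add_apply, hR, hRs, lie_add, hlie, hlie, neg_add]
      congr 1 <;>
      · rw [← Finset.sum_neg_distrib]
        exact Finset.sum_congr rfl fun i _ => by
          rw [lie_smul, ← lie_skew, smul_neg]
    rw [hA, hB, eq_neg_iff_add_eq_zero, ← hsum]
    abel
  -- equivariance of θ
  set θ : L →ₗ[F] L := R + Rstar + lam • LinearMap.id with hθdef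
  have hθ : ∀ (x c : L), θ ⁅x, c⁆ = ⁅x, θ c⁆ := by
    intro x c
    simp only [hθdef, LinearMap.add_apply, LinearMap.smul_apply, LinearMap.id_apply,
      heq x c, lie_add, lie_smul]
  set D : LieIdeal F L := ⁅(⊤ : LieIdeal F L), (⊤ : LieIdeal F L)⁆ with hDdef
  refine ⟨{ toSubmodule := Submodule.map θ D.toSubmodule, lie_mem := ?_ }, rfl⟩
  rintro x m ⟨c, hc, rfl⟩
  exact ⟨⁅x, c⁆, D.lie_mem hc, hθ x c⟩
end

section
/- Suppose r is a solution of the classical Yang–Baxter equation on L, r + τ(r) is L-invariant, and the ideal I_λ = θ_λ([L, L]) satisfies R(I_λ) ⊆ I_λ. Then also R*(I_λ) ⊆ I_λ. -/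
open TensorProduct

theorem stmt_8
    (F : Type*) [Field F] [CharZero F]
    (L : Type*) [LieRing L] [LieAlgebra F L] [FiniteDimensional F L]
    (ω : LinearMap.BilinForm F L)
    (hnd : ω.Nondegenerate)
    (hsymm : ∀ x y : L, ω x y = ω y x)
    (hinv : ∀ x y z : L, ω ⁅x, y⁆ z = ω x ⁅y, z⁆)
    (ι : Type*) [Fintype ι] (a b : ι → L)
    (R Rstar : L →ₗ[F] L)
    (hR : ∀ x : L, R x = ∑ i, ω (b i) x • a i)
    (hadj : ∀ x y : L, ω (R x) y = ω x (Rstar y))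
    (hCYBE : ∑ i, ∑ j, (⁅a i, a j⁆ ⊗ₜ[F] (b i ⊗ₜ[F] b j)
        - a i ⊗ₜ[F] (⁅a j, b i⁆ ⊗ₜ[F] b j)
        + a i ⊗ₜ[F] (a j ⊗ₜ[F] ⁅b i, b j⁆)) = (0 : L ⊗[F] (L ⊗[F] L)))
    (hinvr : ∀ y : L, ∑ i, (⁅a i, y⁆ ⊗ₜ[F] b i + a i ⊗ₜ[F] ⁅b i, y⁆
        + ⁅b i, y⁆ ⊗ₜ[F] a i + b i ⊗ₜ[F] ⁅a i, y⁆) = (0 : L ⊗[F] L))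
    (lam : F)
    (hRI : ∀ x ∈ Submodule.map (R + Rstar + lam • LinearMap.id)
        (⁅(⊤ : LieIdeal F L), (⊤ : LieIdeal F L)⁆ : LieIdeal F L).toSubmodule,
      R x ∈ Submodule.map (R + Rstar + lam • LinearMap.id)
        (⁅(⊤ : LieIdeal F L), (⊤ : LieIdeal F L)⁆ : LieIdeal F L).toSubmodule) :
    ∀ x ∈ Submodule.map (R + Rstar + lam • LinearMap.id)
        (⁅(⊤ : LieIdeal F L), (⊤ : LieIdeal F L)⁆ : LieIdeal F L).toSubmodule,
      Rstar x ∈ Submodule.map (R + Rstar + lam • LinearMap.id)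
        (⁅(⊤ : LieIdeal F L), (⊤ : LieIdeal F L)⁆ : LieIdeal F L).toSubmodule := by
  -- sums of brackets
  have sum_lie : ∀ (f : ι → L) (y : L), ⁅∑ i, f i, y⁆ = ∑ i, ⁅f i, y⁆ := by
    intro f y
    rw [← lie_skew]
    rw [show ⁅y, ∑ i, f i⁆ = ∑ i, ⁅y, f i⁆ from
      map_sum (LieAlgebra.ad F L y) f Finset.univ]
    rw [← Finset.sum_neg_distrib]
    exact Finset.sum_congr rfl fun i _ => lie_skew (f i) y
  -- formula for Rstar
  have hRstar : ∀ x : L, Rstar x = ∑ i, ω (a i) x • b i := by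
    intro x
    have h : ∀ z : L, ω (Rstar x - ∑ i, ω (a i) x • b i) z = 0 := by
      intro z
      have h1 : ω (R z) x = ω z (Rstar x) := hadj z x
      have h2 : ω (R z) x = ∑ i, ω (b i) z * ω (a i) x := by
        rw [hR z]; simp [hsymm]
      rw [map_sub, LinearMap.sub_apply]
      rw [hsymm _ z, ← h1, h2]
      simp [hsymm _ z, mul_comm]
    exact sub_eq_zero.mp (hnd.1 _ h)
  -- key identity: (R + Rstar)⁅y,x⁆ = ⁅y, (R + Rstar) x⁆
  have key : ∀ x y : L, R ⁅y, x⁆ + Rstar ⁅y, x⁆ = ⁅y, R x + Rstar x⁆ := by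
    intro x y
    -- the linear map u ⊗ v ↦ ω v x • u
    let φ : L ⊗[F] L →ₗ[F] L := TensorProduct.lift
      (LinearMap.mk₂ F (fun u v => ω v x • u)
        (fun u u' v => smul_add _ _ _)
        (fun c u v => smul_comm _ _ _)
        (fun u v v' => by simp [add_smul])
        (fun c u v => by simp [mul_smul]))
    have h0 := congrArg φ (hinvr y)
    simp only [map_sum, map_add, map_zero, TensorProduct.lift.tmul,
      LinearMap.mk₂_apply, φ] at h0
    have e1 : ∑ i, ω (b i) x • ⁅a i, y⁆ = ⁅R x, y⁆ := by
      rw [hR x, sum_lie]; simp [smul_lie]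
    have e2 : ∑ i, ω (a i) x • ⁅b i, y⁆ = ⁅Rstar x, y⁆ := by
      rw [hRstar x, sum_lie]; simp [smul_lie]
    simp only [Finset.sum_add_distrib, hinv] at h0
    rw [e1, e2, ← hR ⁅y, x⁆, ← hRstar ⁅y, x⁆] at h0
    have h2 : (⁅R x, y⁆ + ⁅Rstar x, y⁆) + (R ⁅y, x⁆ + Rstar ⁅y, x⁆) = 0 := by
      rw [← h0]; abel
    have h3 := eq_neg_of_add_eq_zero_right h2
    rw [h3, lie_add, neg_add, ← lie_skew y (R x), ← lie_skew y (Rstar x)]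
  -- θ commutes with brackets as stated
  set θ : L →ₗ[F] L := R + Rstar + lam • LinearMap.id with hθ
  have keyθ : ∀ x y : L, θ ⁅y, x⁆ = ⁅y, θ x⁆ := by
    intro x y
    simp only [hθ, LinearMap.add_apply, LinearMap.smul_apply, LinearMap.id_apply]
    rw [lie_add, lie_smul, ← key x y]
  set K : Submodule F L :=
    (⁅(⊤ : LieIdeal F L), (⊤ : LieIdeal F L)⁆ : LieIdeal F L).toSubmodule with hK
  -- θ maps K into K
  have hθK : ∀ z ∈ K, θ z ∈ K := by
    have hspan : K = Submodule.span F
        {m | ∃ (x : (⊤ : LieIdeal F L)) (n : (⊤ : LieIdeal F L)), ⁅(x : L), (n : L)⁆ = m} := by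
      rw [hK]; exact LieSubmodule.lieIdeal_oper_eq_linear_span _ _
    intro z hz
    rw [hspan] at hz ⊢
    refine Submodule.span_induction ?_ ?_ ?_ ?_ hz
    · rintro m ⟨u, v, rfl⟩
      rw [keyθ]
      exact Submodule.subset_span ⟨u, ⟨θ v, trivial⟩, rfl⟩
    · simp
    · intro u v _ _ hu hv
      rw [map_add]; exact Submodule.add_mem _ hu hv
    · intro c u _ hu
      rw [map_smul]; exact Submodule.smul_mem _ c hu
  -- main argument
  rintro x ⟨z, hz, rfl⟩
  have h1 : θ z ∈ K := hθK z hz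
  have h2 : θ (θ z) ∈ Submodule.map θ K := ⟨θ z, h1, rfl⟩
  have h3 : R (θ z) ∈ Submodule.map θ K := hRI _ ⟨z, hz, rfl⟩
  have h4 : lam • θ z ∈ Submodule.map θ K := Submodule.smul_mem _ _ ⟨z, hz, rfl⟩
  have h5 : Rstar (θ z) = θ (θ z) - R (θ z) - lam • θ z := by
    simp only [hθ, LinearMap.add_apply, LinearMap.smul_apply, LinearMap.id_apply]
    abel
  rw [h5]
  exact Submodule.sub_mem _ (Submodule.sub_mem _ h2 h3) h4
end

section
/- Suppose r is a solution of the classical Yang–Baxter equation on L, r + τ(r) is L-invariant, and the ideal I_λ = θ_λ([L, L]) satisfies R(I_λ) ⊆ I_λ and R*(I_λ) ⊆ I_λ. Then the induced linear maps R̄ and R̄* on the quotient Lie algebra L/I_λ are both Rota–Baxter operators of weight λ, and R̄(z) + R̄*(z) + λz = 0 for every z in the commutator ideal [L/I_λ, L/I_λ]. -/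
open TensorProduct
section Helpers
variable {F : Type*} [Field F] {L : Type*} [LieRing L] [LieAlgebra F L]

lemma sum_lie' {ι : Type*} (s : Finset ι) (f : ι → L) (y : L) :
    ⁅∑ i ∈ s, f i, y⁆ = ∑ i ∈ s, ⁅f i, y⁆ :=
  map_sum (AddMonoidHom.mk' (fun x => ⁅x, y⁆) (fun a c => add_lie a c y)) f s

lemma lie_sum' {ι : Type*} (s : Finset ι) (f : ι → L) (y : L) :
    ⁅y, ∑ i ∈ s, f i⁆ = ∑ i ∈ s, ⁅y, f i⁆ :=
  map_sum (AddMonoidHom.mk' (fun x => ⁅y, x⁆) (fun a c => lie_add y a c)) f s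

variable (F L)

noncomputable def smulFirst {M : Type*} [AddCommGroup M] [Module F M] (s : M →ₗ[F] F) :
    L ⊗[F] M →ₗ[F] L :=
  TensorProduct.lift (LinearMap.mk₂ F (fun x t => s t • x)
    (fun x x' t => smul_add (s t) x x')
    (fun c x t => smul_comm (s t) c x)
    (fun x t t' => by simp [add_smul])
    (fun c x t => by simp [mul_smul]))

@[simp] lemma smulFirst_tmul {M : Type*} [AddCommGroup M] [Module F M] (s : M →ₗ[F] F)
    (x : L) (t : M) : smulFirst F L s (x ⊗ₜ[F] t) = s t • x := rfl

noncomputable def smulSecond (g : L →ₗ[F] F) : L ⊗[F] L →ₗ[F] L :=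
  TensorProduct.lift (LinearMap.mk₂ F (fun u v => g u • v)
    (fun u u' v => by simp [add_smul])
    (fun c u v => by simp [mul_smul])
    (fun u v v' => smul_add (g u) v v')
    (fun c u v => smul_comm (g u) c v))

@[simp] lemma smulSecond_tmul (g : L →ₗ[F] F) (u v : L) :
    smulSecond F L g (u ⊗ₜ[F] v) = g u • v := rfl

noncomputable def scalar2 (f g : L →ₗ[F] F) : L ⊗[F] L →ₗ[F] F :=
  TensorProduct.lift (LinearMap.mk₂ F (fun u v => f u * g v)
    (fun u u' v => by simp [add_mul])
    (fun c u v => by simp [mul_assoc])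
    (fun u v v' => by simp [mul_add])
    (fun c u v => by simp; ring))

@[simp] lemma scalar2_tmul (f g : L →ₗ[F] F) (u v : L) :
    scalar2 F L f g (u ⊗ₜ[F] v) = f u * g v := rfl

noncomputable def phi2 (f g : L →ₗ[F] F) : L ⊗[F] (L ⊗[F] L) →ₗ[F] L :=
  TensorProduct.lift (f.smulRight (smulSecond F L g))

@[simp] lemma phi2_tmul (f g : L →ₗ[F] F) (x u v : L) :
    phi2 F L f g (x ⊗ₜ[F] (u ⊗ₜ[F] v)) = f x • g u • v := rfl

@[simp] lemma smulFirst_flip_tmul (ω : LinearMap.BilinForm F L) (x u v : L) :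
    smulFirst F L (ω.flip x) (u ⊗ₜ[F] v) = ω v x • u := rfl

@[simp] lemma phi1_flip_tmul (ω : LinearMap.BilinForm F L) (x y z u v : L) :
    smulFirst F L (scalar2 F L (ω.flip x) (ω.flip y)) (z ⊗ₜ[F] (u ⊗ₜ[F] v))
      = (ω u x * ω v y) • z := rfl

@[simp] lemma phi2_flip_tmul (ω : LinearMap.BilinForm F L) (x y z u v : L) :
    phi2 F L (ω.flip x) (ω.flip y) (z ⊗ₜ[F] (u ⊗ₜ[F] v)) = ω z x • ω u y • v := rfl

end Helpers

section MainLemmas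
variable {F : Type*} [Field F] {L : Type*} [LieRing L] [LieAlgebra F L]
  {ι : Type*} [Fintype ι]

lemma rstar_formula (ω : LinearMap.BilinForm F L) (hnd : ω.Nondegenerate)
    (hsymm : ∀ x y : L, ω x y = ω y x)
    (a b : ι → L) (R Rstar : L →ₗ[F] L)
    (hR : ∀ x : L, R x = ∑ i, ω (b i) x • a i)
    (hadj : ∀ x y : L, ω (R x) y = ω x (Rstar y)) :
    ∀ x : L, Rstar x = ∑ i, ω (a i) x • b i := by
  intro x
  have key : ∀ t : L, ω t (Rstar x) = ω t (∑ i, ω (a i) x • b i) := by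
    intro t
    rw [← hadj t x, hR t]
    simp only [map_sum, map_smul, LinearMap.sum_apply, LinearMap.smul_apply, smul_eq_mul]
    exact Finset.sum_congr rfl fun i _ => by rw [hsymm (b i) t, hsymm t (b i)]; ring
  have key2 : ∀ t : L, ω (Rstar x - ∑ i, ω (a i) x • b i) t = 0 := by
    intro t
    rw [hsymm]
    simp [key t]
  have h0 := hnd.1 _ key2
  rwa [sub_eq_zero] at h0

lemma inv_op (ω : LinearMap.BilinForm F L)
    (hinv : ∀ x y z : L, ω ⁅x, y⁆ z = ω x ⁅y, z⁆)
    (a b : ι → L) (R Rstar : L →ₗ[F] L)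
    (hR : ∀ x : L, R x = ∑ i, ω (b i) x • a i)
    (hRs : ∀ x : L, Rstar x = ∑ i, ω (a i) x • b i)
    (hinvr : ∀ y : L, ∑ i, (⁅a i, y⁆ ⊗ₜ[F] b i + a i ⊗ₜ[F] ⁅b i, y⁆
        + ⁅b i, y⁆ ⊗ₜ[F] a i + b i ⊗ₜ[F] ⁅a i, y⁆) = (0 : L ⊗[F] L)) :
    ∀ x y : L, R ⁅x, y⁆ + Rstar ⁅x, y⁆ = ⁅R x, y⁆ + ⁅Rstar x, y⁆ := by
  intro x y
  have h := congrArg (smulFirst F L (ω.flip x)) (hinvr y)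
  simp only [map_sum, map_add, map_zero, smulFirst_flip_tmul] at h
  have e1 : ⁅R x, y⁆ = ∑ i, ω (b i) x • ⁅a i, y⁆ := by
    rw [hR x, sum_lie']
    exact Finset.sum_congr rfl fun i _ => smul_lie _ _ _
  have e2 : ⁅Rstar x, y⁆ = ∑ i, ω (a i) x • ⁅b i, y⁆ := by
    rw [hRs x, sum_lie']
    exact Finset.sum_congr rfl fun i _ => smul_lie _ _ _
  have t2 : ∀ i : ι, ω ⁅b i, y⁆ x • a i = -(ω (b i) ⁅x, y⁆ • a i) := by
    intro i
    rw [hinv (b i) y x, ← lie_skew x y, map_neg, neg_smul, neg_neg]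
  have t4 : ∀ i : ι, ω ⁅a i, y⁆ x • b i = -(ω (a i) ⁅x, y⁆ • b i) := by
    intro i
    rw [hinv (a i) y x, ← lie_skew x y, map_neg, neg_smul, neg_neg]
  simp only [t2, t4] at h
  rw [e1, e2, hR ⁅x, y⁆, hRs ⁅x, y⁆]
  rw [← sub_eq_zero, ← neg_eq_zero.mpr h]
  rw [Finset.sum_add_distrib, Finset.sum_add_distrib, Finset.sum_add_distrib]
  simp only [Finset.sum_neg_distrib]
  abel
end MainLemmas

section CYBE
variable {F : Type*} [Field F] {L : Type*} [LieRing L] [LieAlgebra F L]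
  {ι : Type*} [Fintype ι]

lemma cybe_R (ω : LinearMap.BilinForm F L)
    (hsymm : ∀ x y : L, ω x y = ω y x)
    (hinv : ∀ x y z : L, ω ⁅x, y⁆ z = ω x ⁅y, z⁆)
    (a b : ι → L) (R Rstar : L →ₗ[F] L)
    (hR : ∀ x : L, R x = ∑ i, ω (b i) x • a i)
    (hRs : ∀ x : L, Rstar x = ∑ i, ω (a i) x • b i)
    (hCYBE : ∑ i, ∑ j, (⁅a i, a j⁆ ⊗ₜ[F] (b i ⊗ₜ[F] b j)
        - a i ⊗ₜ[F] (⁅a j, b i⁆ ⊗ₜ[F] b j)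
        + a i ⊗ₜ[F] (a j ⊗ₜ[F] ⁅b i, b j⁆)) = (0 : L ⊗[F] (L ⊗[F] L))) :
    ∀ x y : L, ⁅R x, R y⁆ = R ⁅x, R y⁆ - R ⁅Rstar x, y⁆ := by
  intro x y
  have h := congrArg (smulFirst F L (scalar2 F L (ω.flip x) (ω.flip y))) hCYBE
  simp only [map_sum, map_add, map_sub, map_zero, phi1_flip_tmul] at h
  have e1 : ⁅R x, R y⁆ = ∑ i, ∑ j, (ω (b i) x * ω (b j) y) • ⁅a i, a j⁆ := by
    rw [hR x, sum_lie']
    refine Finset.sum_congr rfl fun i _ => ?_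
    rw [hR y, smul_lie, lie_sum', Finset.smul_sum]
    refine Finset.sum_congr rfl fun j _ => ?_
    rw [lie_smul, mul_smul]
  have e2 : R ⁅x, R y⁆ = ∑ i, ∑ j, (ω ⁅a j, b i⁆ x * ω (b j) y) • a i := by
    rw [hR ⁅x, R y⁆]
    refine Finset.sum_congr rfl fun i _ => ?_
    have hscal : ω (b i) ⁅x, R y⁆ = ∑ j, ω ⁅a j, b i⁆ x * ω (b j) y := by
      rw [hR y, lie_sum', map_sum]
      refine Finset.sum_congr rfl fun j _ => ?_
      rw [lie_smul, map_smul, smul_eq_mul, hinv (a j) (b i) x, hsymm (a j) ⁅b i, x⁆,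
        hinv (b i) x (a j), mul_comm]
    rw [hscal, Finset.sum_smul]
  have e3 : R ⁅Rstar x, y⁆ = ∑ i, ∑ j, (ω (a j) x * ω ⁅b i, b j⁆ y) • a i := by
    rw [hR ⁅Rstar x, y⁆]
    refine Finset.sum_congr rfl fun i _ => ?_
    have hscal : ω (b i) ⁅Rstar x, y⁆ = ∑ j, ω (a j) x * ω ⁅b i, b j⁆ y := by
      rw [hRs x, sum_lie', map_sum]
      refine Finset.sum_congr rfl fun j _ => ?_
      rw [smul_lie, map_smul, smul_eq_mul, hinv (b i) (b j) y]
    rw [hscal, Finset.sum_smul]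
  rw [e1, ← sub_eq_zero, e2, e3, ← h]
  simp only [Finset.sum_sub_distrib, Finset.sum_add_distrib]
  abel

lemma cybe_Rstar (ω : LinearMap.BilinForm F L)
    (hsymm : ∀ x y : L, ω x y = ω y x)
    (hinv : ∀ x y z : L, ω ⁅x, y⁆ z = ω x ⁅y, z⁆)
    (a b : ι → L) (R Rstar : L →ₗ[F] L)
    (hR : ∀ x : L, R x = ∑ i, ω (b i) x • a i)
    (hRs : ∀ x : L, Rstar x = ∑ i, ω (a i) x • b i)
    (hCYBE : ∑ i, ∑ j, (⁅a i, a j⁆ ⊗ₜ[F] (b i ⊗ₜ[F] b j)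
        - a i ⊗ₜ[F] (⁅a j, b i⁆ ⊗ₜ[F] b j)
        + a i ⊗ₜ[F] (a j ⊗ₜ[F] ⁅b i, b j⁆)) = (0 : L ⊗[F] (L ⊗[F] L))) :
    ∀ x y : L, ⁅Rstar x, Rstar y⁆ = Rstar ⁅Rstar x, y⁆ - Rstar ⁅x, R y⁆ := by
  intro x y
  have h := congrArg (phi2 F L (ω.flip x) (ω.flip y)) hCYBE
  simp only [map_sum, map_add, map_sub, map_zero, phi2_flip_tmul, smul_smul] at h
  have f1 : Rstar ⁅x, R y⁆ = ∑ i, ∑ j, (ω ⁅a i, a j⁆ x * ω (b i) y) • b j := by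
    have aux : Rstar ⁅x, R y⁆ = ∑ j, ∑ i, (ω ⁅a i, a j⁆ x * ω (b i) y) • b j := by
      rw [hRs ⁅x, R y⁆]
      refine Finset.sum_congr rfl fun j _ => ?_
      have hscal : ω (a j) ⁅x, R y⁆ = ∑ i, ω ⁅a i, a j⁆ x * ω (b i) y := by
        rw [hR y, lie_sum', map_sum]
        refine Finset.sum_congr rfl fun i _ => ?_
        rw [lie_smul, map_smul, smul_eq_mul, hinv (a i) (a j) x, hsymm (a i) ⁅a j, x⁆,
          hinv (a j) x (a i), mul_comm]
      rw [hscal, Finset.sum_smul]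
    rw [aux, Finset.sum_comm]
  have f2 : Rstar ⁅Rstar x, y⁆ = ∑ i, ∑ j, (ω (a i) x * ω ⁅a j, b i⁆ y) • b j := by
    have aux : Rstar ⁅Rstar x, y⁆ = ∑ j, ∑ i, (ω (a i) x * ω ⁅a j, b i⁆ y) • b j := by
      rw [hRs ⁅Rstar x, y⁆]
      refine Finset.sum_congr rfl fun j _ => ?_
      have hscal : ω (a j) ⁅Rstar x, y⁆ = ∑ i, ω (a i) x * ω ⁅a j, b i⁆ y := by
        rw [hRs x, sum_lie', map_sum]
        refine Finset.sum_congr rfl fun i _ => ?_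
        rw [smul_lie, map_smul, smul_eq_mul, hinv (a j) (b i) y]
      rw [hscal, Finset.sum_smul]
    rw [aux, Finset.sum_comm]
  have f3 : ⁅Rstar x, Rstar y⁆ = ∑ i, ∑ j, (ω (a i) x * ω (a j) y) • ⁅b i, b j⁆ := by
    rw [hRs x, sum_lie']
    refine Finset.sum_congr rfl fun i _ => ?_
    rw [hRs y, smul_lie, lie_sum', Finset.smul_sum]
    refine Finset.sum_congr rfl fun j _ => ?_
    rw [lie_smul, mul_smul]
  rw [f3, ← sub_eq_zero, f2, f1, ← h]
  simp only [Finset.sum_sub_distrib, Finset.sum_add_distrib]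
  abel

end CYBE

/-- The linear map induced on the quotient `L ⧸ I` by a linear map `T : L → L`
preserving the Lie ideal `I`. -/
def inducedQuotMap (F : Type*) [Field F] (L : Type*) [LieRing L] [LieAlgebra F L]
    (I : LieIdeal F L) (T : L →ₗ[F] L) (h : ∀ x ∈ I, T x ∈ I) :
    (L ⧸ I) →ₗ[F] (L ⧸ I) :=
  Submodule.mapQ I.toSubmodule I.toSubmodule T h

theorem stmt_9
    (F : Type*) [Field F] [CharZero F]
    (L : Type*) [LieRing L] [LieAlgebra F L] [FiniteDimensional F L]
    (ω : LinearMap.BilinForm F L)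
    (hnd : ω.Nondegenerate)
    (hsymm : ∀ x y : L, ω x y = ω y x)
    (hinv : ∀ x y z : L, ω ⁅x, y⁆ z = ω x ⁅y, z⁆)
    (ι : Type*) [Fintype ι] (a b : ι → L)
    (R Rstar : L →ₗ[F] L)
    (hR : ∀ x : L, R x = ∑ i, ω (b i) x • a i)
    (hadj : ∀ x y : L, ω (R x) y = ω x (Rstar y))
    (hCYBE : ∑ i, ∑ j, (⁅a i, a j⁆ ⊗ₜ[F] (b i ⊗ₜ[F] b j)
        - a i ⊗ₜ[F] (⁅a j, b i⁆ ⊗ₜ[F] b j)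
        + a i ⊗ₜ[F] (a j ⊗ₜ[F] ⁅b i, b j⁆)) = (0 : L ⊗[F] (L ⊗[F] L)))
    (hinvr : ∀ y : L, ∑ i, (⁅a i, y⁆ ⊗ₜ[F] b i + a i ⊗ₜ[F] ⁅b i, y⁆
        + ⁅b i, y⁆ ⊗ₜ[F] a i + b i ⊗ₜ[F] ⁅a i, y⁆) = (0 : L ⊗[F] L))
    (lam : F) (I : LieIdeal F L)
    (hI : I.toSubmodule = Submodule.map (R + Rstar + lam • LinearMap.id)
        (⁅(⊤ : LieIdeal F L), (⊤ : LieIdeal F L)⁆ : LieIdeal F L).toSubmodule)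
    (hRI : ∀ x ∈ I, R x ∈ I)
    (hRsI : ∀ x ∈ I, Rstar x ∈ I) :
    (∀ x y : L ⧸ I,
       ⁅inducedQuotMap F L I R hRI x, inducedQuotMap F L I R hRI y⁆ =
       inducedQuotMap F L I R hRI
         (⁅inducedQuotMap F L I R hRI x, y⁆ + ⁅x, inducedQuotMap F L I R hRI y⁆
           + lam • ⁅x, y⁆)) ∧
    (∀ x y : L ⧸ I,
       ⁅inducedQuotMap F L I Rstar hRsI x, inducedQuotMap F L I Rstar hRsI y⁆ =
       inducedQuotMap F L I Rstar hRsI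
         (⁅inducedQuotMap F L I Rstar hRsI x, y⁆ + ⁅x, inducedQuotMap F L I Rstar hRsI y⁆
           + lam • ⁅x, y⁆)) ∧
    (∀ z ∈ (⁅(⊤ : LieIdeal F (L ⧸ I)), (⊤ : LieIdeal F (L ⧸ I))⁆ : LieIdeal F (L ⧸ I)),
       inducedQuotMap F L I R hRI z + inducedQuotMap F L I Rstar hRsI z + lam • z = 0) := by
  have hRs : ∀ x : L, Rstar x = ∑ i, ω (a i) x • b i :=
    rstar_formula ω hnd hsymm a b R Rstar hR hadj
  have hB : ∀ x y : L, R ⁅x, y⁆ + Rstar ⁅x, y⁆ = ⁅R x, y⁆ + ⁅Rstar x, y⁆ :=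
    inv_op ω hinv a b R Rstar hR hRs hinvr
  have hC : ∀ x y : L, ⁅R x, R y⁆ = R ⁅x, R y⁆ - R ⁅Rstar x, y⁆ :=
    cybe_R ω hsymm hinv a b R Rstar hR hRs hCYBE
  have hD : ∀ x y : L, ⁅Rstar x, Rstar y⁆ = Rstar ⁅Rstar x, y⁆ - Rstar ⁅x, R y⁆ :=
    cybe_Rstar ω hsymm hinv a b R Rstar hR hRs hCYBE
  set θ : L →ₗ[F] L := R + Rstar + lam • LinearMap.id with hθdef
  have hθapp : ∀ z : L, θ z = R z + Rstar z + lam • z := fun z => by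
    simp [hθdef, LinearMap.add_apply, LinearMap.smul_apply, LinearMap.id_apply]
  have hθmem : ∀ x y : L, θ ⁅x, y⁆ ∈ I := by
    intro x y
    have hmem : ⁅x, y⁆ ∈ (⁅(⊤ : LieIdeal F L), (⊤ : LieIdeal F L)⁆ : LieIdeal F L).toSubmodule :=
      LieSubmodule.lie_mem_lie (LieSubmodule.mem_top x) (LieSubmodule.mem_top y)
    have h2 : θ ⁅x, y⁆ ∈ I.toSubmodule := by
      rw [hI]; exact Submodule.mem_map_of_mem hmem
    exact h2
  have hθlie : ∀ u v : L, θ ⁅u, v⁆ = ⁅R u, v⁆ + ⁅Rstar u, v⁆ + lam • ⁅u, v⁆ := by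
    intro u v
    rw [hθapp, hB]
  have hθlieR : ∀ u v : L, θ ⁅u, v⁆ = ⁅u, R v⁆ + ⁅u, Rstar v⁆ + lam • ⁅u, v⁆ := by
    intro u v
    calc θ ⁅u, v⁆ = -θ ⁅v, u⁆ := by rw [← lie_skew v u, map_neg, neg_neg]
      _ = -(⁅R v, u⁆ + ⁅Rstar v, u⁆ + lam • ⁅v, u⁆) := by rw [hθlie v u]
      _ = ⁅u, R v⁆ + ⁅u, Rstar v⁆ + lam • ⁅u, v⁆ := by
          rw [← lie_skew u (R v), ← lie_skew u (Rstar v), ← lie_skew u v, smul_neg]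
          abel
  refine ⟨?_, ?_, ?_⟩
  · intro xq yq
    obtain ⟨x, rfl⟩ := Submodule.Quotient.mk_surjective _ xq
    obtain ⟨y, rfl⟩ := Submodule.Quotient.mk_surjective _ yq
    have key : ⁅R x, R y⁆ - R (⁅R x, y⁆ + ⁅x, R y⁆ + lam • ⁅x, y⁆) = -R (θ ⁅x, y⁆) := by
      rw [hC x y, hθlie x y]
      simp only [map_add, map_smul, map_neg]
      abel
    have key2 : (Submodule.Quotient.mk ⁅R x, R y⁆ : L ⧸ I.toSubmodule) =
        Submodule.Quotient.mk (R (⁅R x, y⁆ + ⁅x, R y⁆ + lam • ⁅x, y⁆)) := by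
      rw [Submodule.Quotient.eq, key]
      exact Submodule.neg_mem _ (hRI _ (hθmem x y))
    exact key2
  · intro xq yq
    obtain ⟨x, rfl⟩ := Submodule.Quotient.mk_surjective _ xq
    obtain ⟨y, rfl⟩ := Submodule.Quotient.mk_surjective _ yq
    have key : ⁅Rstar x, Rstar y⁆
        - Rstar (⁅Rstar x, y⁆ + ⁅x, Rstar y⁆ + lam • ⁅x, y⁆) = -Rstar (θ ⁅x, y⁆) := by
      rw [hD x y, hθlieR x y]
      simp only [map_add, map_smul, map_neg]
      abel
    have key2 : (Submodule.Quotient.mk ⁅Rstar x, Rstar y⁆ : L ⧸ I.toSubmodule) =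
        Submodule.Quotient.mk (Rstar (⁅Rstar x, y⁆ + ⁅x, Rstar y⁆ + lam • ⁅x, y⁆)) := by
      rw [Submodule.Quotient.eq, key]
      exact Submodule.neg_mem _ (hRsI _ (hθmem x y))
    exact key2
  · set ψ : (L ⧸ I) →ₗ[F] (L ⧸ I) :=
      inducedQuotMap F L I R hRI + inducedQuotMap F L I Rstar hRsI + lam • LinearMap.id
      with hψdef
    intro z hz
    have hz1 : z ∈ LieSubmodule.toSubmodule
        (⁅(⊤ : LieIdeal F (L ⧸ I)), (⊤ : LieIdeal F (L ⧸ I))⁆ : LieIdeal F (L ⧸ I)) := hz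
    rw [LieSubmodule.lieIdeal_oper_eq_linear_span'] at hz1
    have hle : Submodule.span F {m : L ⧸ I |
        ∃ x ∈ (⊤ : LieIdeal F (L ⧸ I)), ∃ n ∈ (⊤ : LieIdeal F (L ⧸ I)), ⁅x, n⁆ = m}
        ≤ LinearMap.ker ψ := by
      rw [Submodule.span_le]
      rintro m ⟨u, -, v, -, rfl⟩
      obtain ⟨x, rfl⟩ := Submodule.Quotient.mk_surjective _ u
      obtain ⟨y, rfl⟩ := Submodule.Quotient.mk_surjective _ v
      simp only [SetLike.mem_coe, LinearMap.mem_ker, hψdef, LinearMap.add_apply,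
        LinearMap.smul_apply, LinearMap.id_apply]
      have key : (Submodule.Quotient.mk (R ⁅x, y⁆ + Rstar ⁅x, y⁆ + lam • ⁅x, y⁆) :
          L ⧸ I.toSubmodule) = 0 := by
        rw [Submodule.Quotient.mk_eq_zero]
        have h3 : R ⁅x, y⁆ + Rstar ⁅x, y⁆ + lam • ⁅x, y⁆ = θ ⁅x, y⁆ := (hθapp _).symm
        rw [h3]
        exact hθmem x y
      exact key
    have hz2 := hle hz1
    rw [LinearMap.mem_ker, hψdef] at hz2
    rw [LinearMap.add_apply, LinearMap.add_apply, LinearMap.smul_apply,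
      LinearMap.id_apply] at hz2
    exact hz2
end

section
/- Suppose R is a Rota–Baxter operator of weight λ on L such that R([a,b]) + R*([a,b]) = [R(a), b] + [R*(a), b] for all a, b ∈ L, and suppose there is a Lie ideal I of L with I ⊆ [L, L], R(I) = 0 and R*(I) ⊆ I, such that the induced map R̄ on the quotient L/I is a Rota–Baxter operator of weight λ and R̄(z) + R̄*(z) + λz = 0 for every z in the commutator ideal [L/I, L/I]. Then r is a solution of the classical Yang–Baxter equation and r + τ(r) is L-invariant. -/
open TensorProduct

private lemma sum_lie'_s11 {F : Type*} [Field F] {L : Type*} [LieRing L] [LieAlgebra F L]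
    {κ : Type*} (s : Finset κ) (c : κ → F) (v : κ → L) (y : L) :
    ⁅∑ k ∈ s, c k • v k, y⁆ = ∑ k ∈ s, c k • ⁅v k, y⁆ := by
  classical
  induction s using Finset.induction with
  | empty => simp
  | insert _ _ h ih => simp [Finset.sum_insert h, add_lie, smul_lie, ih]

private lemma lie_sum'_s11 {F : Type*} [Field F] {L : Type*} [LieRing L] [LieAlgebra F L]
    {κ : Type*} (s : Finset κ) (c : κ → F) (v : κ → L) (y : L) :
    ⁅y, ∑ k ∈ s, c k • v k⁆ = ∑ k ∈ s, c k • ⁅y, v k⁆ := by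
  classical
  induction s using Finset.induction with
  | empty => simp
  | insert _ _ h ih => simp [Finset.sum_insert h, lie_add, lie_smul, ih]

set_option maxHeartbeats 1000000 in
theorem stmt_11
    (F : Type*) [Field F] [CharZero F]
    (L : Type*) [LieRing L] [LieAlgebra F L] [FiniteDimensional F L]
    (ω : LinearMap.BilinForm F L)
    (hnd : ω.Nondegenerate)
    (hsymm : ∀ x y : L, ω x y = ω y x)
    (hinv : ∀ x y z : L, ω ⁅x, y⁆ z = ω x ⁅y, z⁆)
    (ι : Type*) [Fintype ι] (a b : ι → L)
    (R Rstar : L →ₗ[F] L)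
    (hR : ∀ x : L, R x = ∑ i, ω (b i) x • a i)
    (hadj : ∀ x y : L, ω (R x) y = ω x (Rstar y))
    (lam : F)
    (hRB : ∀ x y : L, ⁅R x, R y⁆ = R (⁅R x, y⁆ + ⁅x, R y⁆ + lam • ⁅x, y⁆))
    (hcentroid : ∀ x y : L, R ⁅x, y⁆ + Rstar ⁅x, y⁆ = ⁅R x, y⁆ + ⁅Rstar x, y⁆)
    (I : LieIdeal F L)
    (hIsub : I ≤ ⁅(⊤ : LieIdeal F L), (⊤ : LieIdeal F L)⁆)
    (hR0 : ∀ x ∈ I, R x = 0)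
    (hRI : ∀ x ∈ I, R x ∈ I)
    (hRsI : ∀ x ∈ I, Rstar x ∈ I)
    (hRBbar : ∀ x y : L ⧸ I,
      ⁅inducedQuotMap F L I R hRI x, inducedQuotMap F L I R hRI y⁆ =
      inducedQuotMap F L I R hRI
        (⁅inducedQuotMap F L I R hRI x, y⁆ + ⁅x, inducedQuotMap F L I R hRI y⁆
          + lam • ⁅x, y⁆))
    (hth : ∀ z ∈ (⁅(⊤ : LieIdeal F (L ⧸ I)), (⊤ : LieIdeal F (L ⧸ I))⁆ : LieIdeal F (L ⧸ I)),
      inducedQuotMap F L I R hRI z + inducedQuotMap F L I Rstar hRsI z + lam • z = 0) :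
    (∑ i, ∑ j, (⁅a i, a j⁆ ⊗ₜ[F] (b i ⊗ₜ[F] b j)
        - a i ⊗ₜ[F] (⁅a j, b i⁆ ⊗ₜ[F] b j)
        + a i ⊗ₜ[F] (a j ⊗ₜ[F] ⁅b i, b j⁆)) = (0 : L ⊗[F] (L ⊗[F] L))) ∧
    (∀ y : L, ∑ i, (⁅a i, y⁆ ⊗ₜ[F] b i + a i ⊗ₜ[F] ⁅b i, y⁆
        + ⁅b i, y⁆ ⊗ₜ[F] a i + b i ⊗ₜ[F] ⁅a i, y⁆) = (0 : L ⊗[F] L)) := by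
  classical
  -- Formula for Rstar
  have hRs : ∀ x : L, Rstar x = ∑ i, ω (a i) x • b i := by
    intro x
    have h : ∀ z : L, ω (Rstar x - ∑ i, ω (a i) x • b i) z = 0 := by
      intro z
      rw [hsymm, map_sub, map_sum]
      have h1 : ω z (Rstar x) = ω (R z) x := (hadj z x).symm
      rw [h1, hR]
      simp only [map_sum, LinearMap.sum_apply, map_smul, LinearMap.smul_apply, smul_eq_mul]
      rw [sub_eq_zero]
      apply Finset.sum_congr rfl
      intro i _
      rw [hsymm z (b i), mul_comm]
    have h0 := hnd.1 _ h
    exact (sub_eq_zero.mp h0)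
  -- key fact coming from the quotient hypothesis
  have hkey : ∀ u v : L, R (R ⁅u, v⁆ + Rstar ⁅u, v⁆ + lam • ⁅u, v⁆) = 0 := by
    intro u v
    have hz : (LieSubmodule.Quotient.mk (N := I) ⁅u, v⁆) ∈
        (⁅(⊤ : LieIdeal F (L ⧸ I)), (⊤ : LieIdeal F (L ⧸ I))⁆ : LieIdeal F (L ⧸ I)) := by
      rw [LieSubmodule.Quotient.mk_bracket]
      exact LieSubmodule.lie_mem_lie (LieSubmodule.mem_top _) (LieSubmodule.mem_top _)
    have h := hth _ hz
    have hmk : ∀ (T : L →ₗ[F] L) (hT : ∀ x ∈ I, T x ∈ I) (w : L),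
        inducedQuotMap F L I T hT (LieSubmodule.Quotient.mk (N := I) w)
          = LieSubmodule.Quotient.mk (N := I) (T w) := by
      intro T hT w
      rfl
    rw [hmk, hmk] at h
    have h2 : (LieSubmodule.Quotient.mk (N := I)
        (R ⁅u, v⁆ + Rstar ⁅u, v⁆ + lam • ⁅u, v⁆)) = 0 := by
      simpa [map_add, map_smul] using h
    have hmem : R ⁅u, v⁆ + Rstar ⁅u, v⁆ + lam • ⁅u, v⁆ ∈ I :=
      (Submodule.Quotient.mk_eq_zero I.toSubmodule).mp h2
    exact hR0 _ hmem
  -- centroid consequences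
  have c1 : ∀ x y : L, ⁅Rstar x, y⁆ = R ⁅x, y⁆ + Rstar ⁅x, y⁆ - ⁅R x, y⁆ := by
    intro x y
    rw [eq_sub_iff_add_eq, add_comm, ← hcentroid]
  have c2 : ∀ x y : L, ⁅x, Rstar y⁆ = R ⁅x, y⁆ + Rstar ⁅x, y⁆ - ⁅x, R y⁆ := by
    intro x y
    have h := c1 y x
    have h2 : ⁅x, Rstar y⁆ = -⁅Rstar y, x⁆ := (lie_skew _ _).symm
    have h3 : ⁅y, x⁆ = -⁅x, y⁆ := by rw [← lie_skew x y, neg_neg]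
    have h4 : ⁅R y, x⁆ = -⁅x, R y⁆ := by rw [← lie_skew x (R y), neg_neg]
    rw [h2, h, h3, h4]
    simp only [map_neg]
    abel
  -- the operator identity equivalent to the CYBE
  have hpsi : ∀ x y : L, Rstar ⁅x, R y⁆ - Rstar ⁅Rstar x, y⁆ + ⁅Rstar x, Rstar y⁆ = 0 := by
    intro x y
    have hk := hkey x y
    have hb := hRB x y
    rw [c1 x (Rstar y), c2 x y, c2 (R x) y, c1 x y]
    simp only [map_add, map_sub, map_smul] at hk hb ⊢
    rw [hb]
    rw [← hk]
    abel
  -- basis and dual basis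
  set bb := Module.finBasis F L with hbb
  set f := ω.dualBasis hnd bb with hf
  have expand : ∀ v : L, v = ∑ k, ω (f k) v • bb k := by
    intro v
    have hg : (∑ k, (ω (f k)).smulRight (bb k) : L →ₗ[F] L) = LinearMap.id := by
      apply bb.ext
      intro j
      simp [f, LinearMap.sum_apply, LinearMap.BilinForm.apply_dualBasis_left]
    have := congrArg (fun g : L →ₗ[F] L => g v) hg
    simpa [LinearMap.sum_apply] using this.symm
  have step : ∀ {N : Type _} [AddCommGroup N] [Module F N] (v : L) (w : N),
      v ⊗ₜ[F] w = ∑ k, bb k ⊗ₜ[F] (ω (f k) v • w) := by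
    intro N _ _ v w
    conv_lhs => rw [expand v]
    rw [sum_tmul]
    exact Finset.sum_congr rfl fun k _ => smul_tmul _ _ _
  -- evaluation lemmas
  have hA : ∀ u y : L, ∑ i, ω u ⁅a i, y⁆ • b i = -(Rstar ⁅u, y⁆) := by
    intro u y
    rw [hRs ⁅u, y⁆, ← Finset.sum_neg_distrib]
    apply Finset.sum_congr rfl
    intro i _
    rw [← neg_smul]
    congr 1
    rw [← hinv u (a i) y, show ⁅u, a i⁆ = -⁅a i, u⁆ from (lie_skew u (a i)).symm]
    simp only [map_neg, LinearMap.neg_apply]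
    rw [hinv]
  have hC : ∀ u y : L, ∑ i, ω u ⁅b i, y⁆ • a i = -(R ⁅u, y⁆) := by
    intro u y
    rw [hR ⁅u, y⁆, ← Finset.sum_neg_distrib]
    apply Finset.sum_congr rfl
    intro i _
    rw [← neg_smul]
    congr 1
    rw [← hinv u (b i) y, show ⁅u, b i⁆ = -⁅b i, u⁆ from (lie_skew u (b i)).symm]
    simp only [map_neg, LinearMap.neg_apply]
    rw [hinv]
  have hB : ∀ u y : L, ∑ i, ω u (a i) • ⁅b i, y⁆ = ⁅Rstar u, y⁆ := by
    intro u y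
    rw [hRs u, sum_lie'_s11]
    apply Finset.sum_congr rfl
    intro i _
    rw [hsymm u (a i)]
  have hD : ∀ u y : L, ∑ i, ω u (b i) • ⁅a i, y⁆ = ⁅R u, y⁆ := by
    intro u y
    rw [hR u, sum_lie'_s11]
    apply Finset.sum_congr rfl
    intro i _
    rw [hsymm u (b i)]
  constructor
  · -- the CYBE
    have step2 : ∀ v w u : L, v ⊗ₜ[F] (w ⊗ₜ[F] u) =
        ∑ q : (Fin (Module.finrank F L)) × (Fin (Module.finrank F L)),
          bb q.1 ⊗ₜ[F] (bb q.2 ⊗ₜ[F] ((ω (f q.1) v * ω (f q.2) w) • u)) := by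
      intro v w u
      conv_rhs => rw [Fintype.sum_prod_type]
      rw [step v (w ⊗ₜ[F] u)]
      refine Finset.sum_congr rfl fun k _ => ?_
      rw [smul_tmul', smul_tmul, step w (ω (f k) v • u), tmul_sum]
      refine Finset.sum_congr rfl fun l _ => ?_
      congr 2
      rw [smul_smul, mul_comm]
    have hU1 : ∀ u v : L, ∑ j, (∑ i, ω u ⁅a i, a j⁆ * ω v (b i)) • b j = Rstar ⁅u, R v⁆ := by
      intro u v
      rw [hRs ⁅u, R v⁆]
      apply Finset.sum_congr rfl
      intro j _
      congr 1
      rw [hsymm (a j), hinv u (R v) (a j)]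
      conv_rhs => rw [hR v, sum_lie'_s11]
      simp only [map_sum, map_smul, smul_eq_mul]
      apply Finset.sum_congr rfl
      intro i _
      rw [hsymm v (b i)]
      ring
    have hU2 : ∀ u v : L, ∑ j, (∑ i, ω u (a i) * ω v ⁅a j, b i⁆) • b j
        = Rstar ⁅Rstar u, v⁆ := by
      intro u v
      rw [hRs ⁅Rstar u, v⁆]
      apply Finset.sum_congr rfl
      intro j _
      congr 1
      rw [hsymm (a j), hinv (Rstar u) v (a j)]
      conv_rhs => rw [hRs u]
      simp only [map_sum, LinearMap.sum_apply, map_smul, LinearMap.smul_apply, smul_eq_mul]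
      apply Finset.sum_congr rfl
      intro i _
      rw [hsymm u (a i), ← hinv v (a j) (b i), hsymm ⁅v, a j⁆ (b i)]
    have hU3 : ∀ u v : L, ∑ i, ∑ j, (ω u (a i) * ω v (a j)) • ⁅b i, b j⁆
        = ⁅Rstar u, Rstar v⁆ := by
      intro u v
      rw [hRs u, hRs v, sum_lie'_s11]
      apply Finset.sum_congr rfl
      intro i _
      rw [lie_sum'_s11, Finset.smul_sum]
      apply Finset.sum_congr rfl
      intro j _
      rw [smul_smul, hsymm u (a i), hsymm v (a j)]
    have key : ∀ k l : Fin (Module.finrank F L),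
        (∑ p : ι × ι, ((ω (f k) ⁅a p.1, a p.2⁆ * ω (f l) (b p.1)) • b p.2
          - (ω (f k) (a p.1) * ω (f l) ⁅a p.2, b p.1⁆) • b p.2
          + (ω (f k) (a p.1) * ω (f l) (a p.2)) • ⁅b p.1, b p.2⁆)) = 0 := by
      intro k l
      rw [Finset.sum_add_distrib, Finset.sum_sub_distrib]
      have e1 : ∑ p : ι × ι, (ω (f k) ⁅a p.1, a p.2⁆ * ω (f l) (b p.1)) • b p.2
          = ∑ j, (∑ i, ω (f k) ⁅a i, a j⁆ * ω (f l) (b i)) • b j := by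
        simp only [Fintype.sum_prod_type]
        rw [Finset.sum_comm]
        exact Finset.sum_congr rfl fun j _ => (Finset.sum_smul).symm
      have e2 : ∑ p : ι × ι, (ω (f k) (a p.1) * ω (f l) ⁅a p.2, b p.1⁆) • b p.2
          = ∑ j, (∑ i, ω (f k) (a i) * ω (f l) ⁅a j, b i⁆) • b j := by
        simp only [Fintype.sum_prod_type]
        rw [Finset.sum_comm]
        exact Finset.sum_congr rfl fun j _ => (Finset.sum_smul).symm
      have e3 : ∑ p : ι × ι, (ω (f k) (a p.1) * ω (f l) (a p.2)) • ⁅b p.1, b p.2⁆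
          = ∑ i, ∑ j, (ω (f k) (a i) * ω (f l) (a j)) • ⁅b i, b j⁆ := by
        simp only [Fintype.sum_prod_type]
      rw [e1, hU1, e2, hU2, e3, hU3]
      exact hpsi (f k) (f l)
    calc ∑ i, ∑ j, (⁅a i, a j⁆ ⊗ₜ[F] (b i ⊗ₜ[F] b j)
          - a i ⊗ₜ[F] (⁅a j, b i⁆ ⊗ₜ[F] b j)
          + a i ⊗ₜ[F] (a j ⊗ₜ[F] ⁅b i, b j⁆))
        = ∑ p : ι × ι, (⁅a p.1, a p.2⁆ ⊗ₜ[F] (b p.1 ⊗ₜ[F] b p.2)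
          - a p.1 ⊗ₜ[F] (⁅a p.2, b p.1⁆ ⊗ₜ[F] b p.2)
          + a p.1 ⊗ₜ[F] (a p.2 ⊗ₜ[F] ⁅b p.1, b p.2⁆)) :=
          (Fintype.sum_prod_type (f := fun p : ι × ι =>
            (⁅a p.1, a p.2⁆ ⊗ₜ[F] (b p.1 ⊗ₜ[F] b p.2)
            - a p.1 ⊗ₜ[F] (⁅a p.2, b p.1⁆ ⊗ₜ[F] b p.2)
            + a p.1 ⊗ₜ[F] (a p.2 ⊗ₜ[F] ⁅b p.1, b p.2⁆)))).symm
      _ = ∑ p : ι × ι, ∑ q : (Fin (Module.finrank F L)) × (Fin (Module.finrank F L)),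
          (bb q.1 ⊗ₜ[F] (bb q.2 ⊗ₜ[F] ((ω (f q.1) ⁅a p.1, a p.2⁆ * ω (f q.2) (b p.1)) • b p.2))
          - bb q.1 ⊗ₜ[F] (bb q.2 ⊗ₜ[F] ((ω (f q.1) (a p.1) * ω (f q.2) ⁅a p.2, b p.1⁆) • b p.2))
          + bb q.1 ⊗ₜ[F] (bb q.2 ⊗ₜ[F] ((ω (f q.1) (a p.1) * ω (f q.2) (a p.2)) • ⁅b p.1, b p.2⁆))) := by
          refine Finset.sum_congr rfl fun p _ => ?_
          rw [step2, step2, step2, ← Finset.sum_sub_distrib, ← Finset.sum_add_distrib]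
      _ = ∑ q : (Fin (Module.finrank F L)) × (Fin (Module.finrank F L)), ∑ p : ι × ι,
          (bb q.1 ⊗ₜ[F] (bb q.2 ⊗ₜ[F] ((ω (f q.1) ⁅a p.1, a p.2⁆ * ω (f q.2) (b p.1)) • b p.2))
          - bb q.1 ⊗ₜ[F] (bb q.2 ⊗ₜ[F] ((ω (f q.1) (a p.1) * ω (f q.2) ⁅a p.2, b p.1⁆) • b p.2))
          + bb q.1 ⊗ₜ[F] (bb q.2 ⊗ₜ[F] ((ω (f q.1) (a p.1) * ω (f q.2) (a p.2)) • ⁅b p.1, b p.2⁆))) :=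
          Finset.sum_comm
      _ = ∑ q : (Fin (Module.finrank F L)) × (Fin (Module.finrank F L)),
          bb q.1 ⊗ₜ[F] (bb q.2 ⊗ₜ[F] (∑ p : ι × ι,
            ((ω (f q.1) ⁅a p.1, a p.2⁆ * ω (f q.2) (b p.1)) • b p.2
            - (ω (f q.1) (a p.1) * ω (f q.2) ⁅a p.2, b p.1⁆) • b p.2
            + (ω (f q.1) (a p.1) * ω (f q.2) (a p.2)) • ⁅b p.1, b p.2⁆))) := by
          refine Finset.sum_congr rfl fun q _ => ?_
          simp only [tmul_sum, tmul_sub, tmul_add]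
      _ = 0 := by
          refine Finset.sum_eq_zero fun q _ => ?_
          rw [key q.1 q.2, tmul_zero, tmul_zero]
  · -- invariance of r + τ(r)
    intro y
    have keyInv : ∀ k, (∑ i, (ω (f k) ⁅a i, y⁆ • b i + ω (f k) (a i) • ⁅b i, y⁆
        + ω (f k) ⁅b i, y⁆ • a i + ω (f k) (b i) • ⁅a i, y⁆)) = 0 := by
      intro k
      rw [Finset.sum_add_distrib, Finset.sum_add_distrib, Finset.sum_add_distrib]
      rw [hA (f k) y, hB (f k) y, hC (f k) y, hD (f k) y]
      rw [c1]
      abel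
    calc ∑ i, (⁅a i, y⁆ ⊗ₜ[F] b i + a i ⊗ₜ[F] ⁅b i, y⁆
        + ⁅b i, y⁆ ⊗ₜ[F] a i + b i ⊗ₜ[F] ⁅a i, y⁆)
        = ∑ i, ∑ k, (bb k ⊗ₜ[F] (ω (f k) ⁅a i, y⁆ • b i + ω (f k) (a i) • ⁅b i, y⁆
            + ω (f k) ⁅b i, y⁆ • a i + ω (f k) (b i) • ⁅a i, y⁆)) := by
          refine Finset.sum_congr rfl fun i _ => ?_
          rw [step ⁅a i, y⁆ (b i), step (a i) ⁅b i, y⁆, step ⁅b i, y⁆ (a i),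
            step (b i) ⁅a i, y⁆, ← Finset.sum_add_distrib, ← Finset.sum_add_distrib,
            ← Finset.sum_add_distrib]
          exact Finset.sum_congr rfl fun k _ => by rw [tmul_add, tmul_add, tmul_add]
      _ = ∑ k, bb k ⊗ₜ[F] (∑ i, (ω (f k) ⁅a i, y⁆ • b i + ω (f k) (a i) • ⁅b i, y⁆
            + ω (f k) ⁅b i, y⁆ • a i + ω (f k) (b i) • ⁅a i, y⁆)) := by
          rw [Finset.sum_comm]
          exact Finset.sum_congr rfl fun k _ => (tmul_sum _ _ _).symm
      _ = 0 := by simp [keyInv]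
end

section
/- Let L be a finite-dimensional simple Lie algebra over a field F of characteristic 0 and let r = Σ_i a_i ⊗ b_i ≠ 0 be a solution of the classical Yang–Baxter equation such that r + τ(r) ≠ 0 and r + τ(r) is L-invariant. Then there exists a nondegenerate symmetric invariant bilinear form ω on L and a nonzero λ ∈ F such that the operator R(a) = Σ_i ω(b_i, a) a_i is a Rota–Baxter operator of weight λ and R(a) + R*(a) + λa = 0 for all a ∈ L, where R* is the adjoint of R with respect to ω. -/
open TensorProduct

section auxlemmas

variable {L : Type*} [LieRing L]

private lemma aux_lie_sum {ι : Type*} (s : Finset ι) (z : L) (f : ι → L) :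
    ⁅z, ∑ i ∈ s, f i⁆ = ∑ i ∈ s, ⁅z, f i⁆ := by
  induction s using Finset.cons_induction with
  | empty => simp
  | cons i s hi ih => simp [Finset.sum_cons, ih]

private lemma aux_sum_lie {ι : Type*} (s : Finset ι) (z : L) (f : ι → L) :
    ⁅∑ i ∈ s, f i, z⁆ = ∑ i ∈ s, ⁅f i, z⁆ := by
  induction s using Finset.cons_induction with
  | empty => simp
  | cons i s hi ih => simp [Finset.sum_cons, ih]

end auxlemmas

set_option maxHeartbeats 1000000 in
theorem stmt_12 (F : Type*) [Field F] [CharZero F]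
    (L : Type*) [LieRing L] [LieAlgebra F L] [FiniteDimensional F L]
    [LieAlgebra.IsSimple F L]
    (ι : Type*) [Fintype ι] (a b : ι → L)
    (hr : ∑ i, a i ⊗ₜ[F] b i ≠ (0 : L ⊗[F] L))
    (hCYBE : ∑ i, ∑ j, (⁅a i, a j⁆ ⊗ₜ[F] (b i ⊗ₜ[F] b j)
        - a i ⊗ₜ[F] (⁅a j, b i⁆ ⊗ₜ[F] b j)
        + a i ⊗ₜ[F] (a j ⊗ₜ[F] ⁅b i, b j⁆)) = (0 : L ⊗[F] (L ⊗[F] L)))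
    (hsympart : ∑ i, (a i ⊗ₜ[F] b i + b i ⊗ₜ[F] a i) ≠ (0 : L ⊗[F] L))
    (hinvr : ∀ y : L, ∑ i, (⁅a i, y⁆ ⊗ₜ[F] b i + a i ⊗ₜ[F] ⁅b i, y⁆
        + ⁅b i, y⁆ ⊗ₜ[F] a i + b i ⊗ₜ[F] ⁅a i, y⁆) = (0 : L ⊗[F] L)) :
    ∃ ω : LinearMap.BilinForm F L,
      ω.Nondegenerate ∧
      (∀ x y : L, ω x y = ω y x) ∧
      (∀ x y z : L, ω ⁅x, y⁆ z = ω x ⁅y, z⁆) ∧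
      ∃ lam : F, lam ≠ 0 ∧
      ∃ R Rstar : L →ₗ[F] L,
        (∀ x : L, R x = ∑ i, ω (b i) x • a i) ∧
        (∀ x y : L, ω (R x) y = ω x (Rstar y)) ∧
        (∀ x y : L, ⁅R x, R y⁆ = R (⁅R x, y⁆ + ⁅x, R y⁆ + lam • ⁅x, y⁆)) ∧
        (∀ x : L, R x + Rstar x + lam • x = 0) := by
  classical
  -- The canonical isomorphism `L ⊗ L ≃ Hom(Dual L, L)`.
  set Λ : (L ⊗[F] L) ≃ₗ[F] (Module.Dual F L →ₗ[F] L) :=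
    (TensorProduct.congr (Module.evalEquiv F L) (LinearEquiv.refl F L)).trans
      (dualTensorHomEquiv F (Module.Dual F L) L) with hΛdef
  have hΛ : ∀ (u v : L) (f : Module.Dual F L), Λ (u ⊗ₜ[F] v) f = f u • v := by
    intro u v f
    simp [hΛdef, dualTensorHomEquiv, dualTensorHom_apply]
  -- `σ` is the map `Dual L → L` induced by the symmetric part of `r`.
  set σ : Module.Dual F L →ₗ[F] L := Λ (∑ i, (a i ⊗ₜ[F] b i + b i ⊗ₜ[F] a i)) with hσdef
  have hσ : ∀ f : Module.Dual F L, σ f = ∑ i, (f (a i) • b i + f (b i) • a i) := by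
    intro f
    rw [hσdef, map_sum, LinearMap.sum_apply]
    exact Finset.sum_congr rfl fun i _ => by rw [map_add, LinearMap.add_apply, hΛ, hΛ]
  have hσne : σ ≠ 0 := by
    rw [hσdef]
    intro h
    exact hsympart (Λ.map_eq_zero_iff.mp h)
  -- invariance of the symmetric part in terms of `σ`
  have hc : ∀ (f : Module.Dual F L) (y : L),
      ∑ i, (f ⁅a i, y⁆ • b i + f (a i) • ⁅b i, y⁆ + f ⁅b i, y⁆ • a i + f (b i) • ⁅a i, y⁆)
        = (0 : L) := by
    intro f y
    have h0 := congrArg (fun t => (TensorProduct.lid F L) ((LinearMap.rTensor L f) t)) (hinvr y)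
    simpa [map_sum, map_add, LinearMap.rTensor_tmul, TensorProduct.lid_tmul] using h0
  have hequiv : ∀ (f : Module.Dual F L) (y : L),
      σ (f ∘ₗ (LieAlgebra.ad F L y)) = ⁅σ f, y⁆ := by
    intro f y
    rw [hσ, hσ, aux_sum_lie, eq_comm, ← sub_eq_zero, ← Finset.sum_sub_distrib]
    refine Eq.trans (Finset.sum_congr rfl fun i _ => ?_) (hc f y)
    have e1 : ⁅y, a i⁆ = -⁅a i, y⁆ := by rw [← lie_skew]
    have e2 : ⁅y, b i⁆ = -⁅b i, y⁆ := by rw [← lie_skew]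
    simp only [LinearMap.comp_apply, LieAlgebra.ad_apply, e1, e2, map_neg, neg_smul, add_lie,
      smul_lie, sub_neg_eq_add]
    abel
  -- the range of `σ` is a nonzero ideal, hence all of `L`
  have hrange : ∀ z y : L, z ∈ LinearMap.range σ → ⁅y, z⁆ ∈ LinearMap.range σ := by
    rintro z y ⟨f, rfl⟩
    exact ⟨-(f ∘ₗ LieAlgebra.ad F L y), by rw [map_neg, hequiv, lie_skew]⟩
  set I : LieIdeal F L := { LinearMap.range σ with lie_mem := fun {y z} hz => hrange z y hz }
    with hIdef
  have hItop : I = ⊤ := by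
    rcases LieAlgebra.IsSimple.eq_bot_or_eq_top I with h | h
    · exfalso
      apply hσne
      have h2 : LinearMap.range σ = ⊥ := by
        have h3 := congrArg LieSubmodule.toSubmodule h
        simpa [hIdef] using h3
      exact LinearMap.range_eq_bot.mp h2
    · exact h
  have hsurj : Function.Surjective σ := by
    intro z
    have hz : z ∈ I := hItop ▸ LieSubmodule.mem_top z
    exact hz
  have hinjσ : Function.Injective σ :=
    (LinearMap.injective_iff_surjective_of_finrank_eq_finrank
      Subspace.dual_finrank_eq).mpr hsurj
  set σe : Module.Dual F L ≃ₗ[F] L := LinearEquiv.ofBijective σ ⟨hinjσ, hsurj⟩ with hσedef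
  set ω : LinearMap.BilinForm F L := σe.symm.toLinearMap with hωdef
  have hσω : ∀ x : L, σ (ω x) = x := by
    intro x
    have := σe.apply_symm_apply x
    exact this
  have hωσ : ∀ f : Module.Dual F L, ω (σ f) = f := by
    intro f
    have := σe.symm_apply_apply f
    exact this
  -- symmetry
  have hsymm : ∀ x z : L, ω x z = ω z x := by
    intro x z
    conv_lhs => rw [show (ω x) z = (ω x) (σ (ω z)) by rw [hσω]]
    conv_rhs => rw [show (ω z) x = (ω z) (σ (ω x)) by rw [hσω]]
    rw [hσ, hσ, map_sum, map_sum]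
    refine Finset.sum_congr rfl fun i _ => ?_
    simp only [map_add, map_smul, smul_eq_mul]
    ring
  -- invariance
  have hinvω : ∀ x y z : L, ω ⁅x, y⁆ z = ω x ⁅y, z⁆ := by
    intro x y z
    have h1 : σ ((ω x) ∘ₗ LieAlgebra.ad F L y) = ⁅x, y⁆ := by rw [hequiv, hσω]
    have h2 : ω ⁅x, y⁆ = (ω x) ∘ₗ LieAlgebra.ad F L y := by rw [← h1, hωσ]
    rw [h2]
    simp [LieAlgebra.ad_apply]
  -- nondegeneracy
  have hnd : ω.Nondegenerate := by
    have hL : ∀ x : L, (∀ y, ω x y = 0) → x = 0 := by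
      intro x hx
      have h1 : ω x = 0 := LinearMap.ext hx
      have := hσω x
      rw [h1, map_zero] at this
      exact this.symm
    exact ⟨hL, fun y hy => hL y fun x => by rw [hsymm]; exact hy x⟩
  -- the Rota-Baxter operator and its adjoint
  set R : L →ₗ[F] L := ∑ i, LinearMap.smulRight (ω (b i)) (a i) with hRdef
  set Rs : L →ₗ[F] L := ∑ i, LinearMap.smulRight (ω (a i)) (b i) with hRsdef
  have hR : ∀ x : L, R x = ∑ i, ω (b i) x • a i := by
    intro x
    simp [hRdef, LinearMap.sum_apply]
  have hRs : ∀ x : L, Rs x = ∑ i, ω (a i) x • b i := by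
    intro x
    simp [hRsdef, LinearMap.sum_apply]
  -- Casimir property : R + Rs = id
  have hcas : ∀ x : L, R x + Rs x = x := by
    intro x
    rw [hR, hRs, ← Finset.sum_add_distrib]
    have : ∑ i, (ω (b i) x • a i + ω (a i) x • b i)
        = ∑ i, ((ω x) (a i) • b i + (ω x) (b i) • a i) := by
      refine Finset.sum_congr rfl fun i _ => ?_
      rw [hsymm (b i) x, hsymm (a i) x]
      abel
    rw [this, ← hσ, hσω]
  -- adjoint property
  have hadj : ∀ x y : L, ω (R x) y = ω x (Rs y) := by
    intro x y
    rw [hR, hRs, map_sum, LinearMap.sum_apply, map_sum]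
    refine Finset.sum_congr rfl fun i _ => ?_
    simp only [map_smul, LinearMap.smul_apply, smul_eq_mul]
    rw [hsymm x (b i)]
    ring
  refine ⟨ω, hnd, hsymm, hinvω, -1, by norm_num, R, Rs, hR, hadj, ?_, ?_⟩
  · -- the Rota-Baxter identity
    intro x y
    -- apply the functional Φ to the CYBE
    set ψ : L ⊗[F] L →ₗ[F] F :=
      TensorProduct.lift ((ω.flip x).smulRight (ω.flip y)) with hψdef
    set Φ : L ⊗[F] (L ⊗[F] L) →ₗ[F] L :=
      (TensorProduct.rid F L).toLinearMap ∘ₗ LinearMap.lTensor L ψ with hΦdef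
    have hΦ : ∀ u v w : L, Φ (u ⊗ₜ[F] (v ⊗ₜ[F] w)) = (ω v x * ω w y) • u := by
      intro u v w
      simp [hΦdef, hψdef, LinearMap.lTensor_tmul, TensorProduct.lift.tmul,
        TensorProduct.rid_tmul, LinearMap.smulRight_apply, LinearMap.flip_apply,
        LinearMap.smul_apply, smul_eq_mul, mul_comm, smul_smul]
    have hE0 := congrArg Φ hCYBE
    rw [map_zero, map_sum] at hE0
    have hE : ∑ i, ∑ j, ((ω (b i) x * ω (b j) y) • ⁅a i, a j⁆
        - (ω ⁅a j, b i⁆ x * ω (b j) y) • a i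
        + (ω (a j) x * ω ⁅b i, b j⁆ y) • a i) = (0 : L) := by
      rw [← hE0]
      refine Finset.sum_congr rfl fun i _ => ?_
      rw [map_sum]
      refine Finset.sum_congr rfl fun j _ => ?_
      rw [map_add, map_sub, hΦ, hΦ, hΦ]
    -- rewrite the scalars using invariance
    have hE' : ∑ i, ∑ j, ((ω (b i) x * ω (b j) y) • ⁅a i, a j⁆
        + (ω (b i) ⁅a j, x⁆ * ω (b j) y) • a i
        + (ω (a j) x * ω (b i) ⁅b j, y⁆) • a i) = (0 : L) := by
      rw [← hE]
      refine Finset.sum_congr rfl fun i _ => ?_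
      refine Finset.sum_congr rfl fun j _ => ?_
      have e1 : ω ⁅a j, b i⁆ x = -(ω (b i) ⁅a j, x⁆) := by
        have : ⁅a j, b i⁆ = -⁅b i, a j⁆ := by rw [lie_skew]
        rw [this, map_neg, LinearMap.neg_apply, hinvω]
      have e2 : ω ⁅b i, b j⁆ y = ω (b i) ⁅b j, y⁆ := hinvω _ _ _
      rw [e1, e2, neg_mul, neg_smul, sub_neg_eq_add]
    -- identify the three double sums
    have h1 : ∑ i, ∑ j, (ω (b i) x * ω (b j) y) • ⁅a i, a j⁆ = ⁅R x, R y⁆ := by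
      rw [hR, hR, aux_sum_lie]
      refine Finset.sum_congr rfl fun i _ => ?_
      rw [smul_lie, aux_lie_sum, Finset.smul_sum]
      refine Finset.sum_congr rfl fun j _ => ?_
      rw [lie_smul, smul_smul]
    have hbr : ⁅R y, x⁆ = ∑ j, ω (b j) y • ⁅a j, x⁆ := by
      rw [hR, aux_sum_lie]
      exact Finset.sum_congr rfl fun j _ => smul_lie _ _ _
    have h2 : R ⁅R y, x⁆ = ∑ i, ∑ j, (ω (b i) ⁅a j, x⁆ * ω (b j) y) • a i := by
      rw [hR]
      refine Finset.sum_congr rfl fun i _ => ?_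
      rw [hbr, map_sum, Finset.sum_smul]
      refine Finset.sum_congr rfl fun j _ => ?_
      rw [map_smul, smul_eq_mul, mul_comm]
    have hbs : ⁅Rs x, y⁆ = ∑ j, ω (a j) x • ⁅b j, y⁆ := by
      rw [hRs, aux_sum_lie]
      exact Finset.sum_congr rfl fun j _ => smul_lie _ _ _
    have h3 : R ⁅Rs x, y⁆ = ∑ i, ∑ j, (ω (a j) x * ω (b i) ⁅b j, y⁆) • a i := by
      rw [hR]
      refine Finset.sum_congr rfl fun i _ => ?_
      rw [hbs, map_sum, Finset.sum_smul]
      refine Finset.sum_congr rfl fun j _ => ?_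
      rw [map_smul, smul_eq_mul]
    -- combine
    have hsplit : ∑ i, ∑ j, ((ω (b i) x * ω (b j) y) • ⁅a i, a j⁆
        + (ω (b i) ⁅a j, x⁆ * ω (b j) y) • a i
        + (ω (a j) x * ω (b i) ⁅b j, y⁆) • a i)
        = (∑ i, ∑ j, (ω (b i) x * ω (b j) y) • ⁅a i, a j⁆)
          + (∑ i, ∑ j, (ω (b i) ⁅a j, x⁆ * ω (b j) y) • a i)
          + (∑ i, ∑ j, (ω (a j) x * ω (b i) ⁅b j, y⁆) • a i) := by
      simp [Finset.sum_add_distrib]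
    have hE'' : ⁅R x, R y⁆ + R ⁅R y, x⁆ + R ⁅Rs x, y⁆ = 0 := by
      rw [← h1, h2, h3, ← hsplit]
      exact hE'
    have hrw1 : R ⁅R y, x⁆ = -R ⁅x, R y⁆ := by
      rw [show ⁅R y, x⁆ = -⁅x, R y⁆ from (lie_skew _ _).symm, map_neg]
    have hrw2 : Rs x = x - R x := eq_sub_of_add_eq' (hcas x)
    rw [hrw1, hrw2, sub_lie, map_sub] at hE''
    rw [map_add, map_add, map_smul, neg_one_smul]
    rw [← sub_eq_zero, ← hE'']
    abel
  · intro x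
    rw [neg_one_smul, hcas x, add_neg_cancel]
end

section
/- Suppose R and R* are both Rota–Baxter operators of the same nonzero weight λ on L, that R([a,b]) + R*([a,b]) = [R(a), b] + [R*(a), b] for all a, b ∈ L, and that the commutator ideal [L, L] decomposes as a direct sum of two Lie ideals [L, L] = I_1 ⊕ I_2 of L with R(I_1) = R*(I_1) = 0 and R(x) + R*(x) + λx = 0 for all x ∈ I_2. Then r is a solution of the classical Yang–Baxter equation and r + τ(r) is L-invariant. -/
open TensorProduct LinearMap

noncomputable def E2 (F : Type*) [Field F] (L : Type*) [AddCommGroup L] [Module F L]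
    [FiniteDimensional F L] (ω : LinearMap.BilinForm F L) (hnd : ω.Nondegenerate) :
    L ⊗[F] L ≃ₗ[F] Module.Dual F (L ⊗[F] L) :=
  (TensorProduct.congr (ω.toDual hnd) (ω.toDual hnd)).trans (dualDistribEquiv F L L)

lemma E2_tmul (F : Type*) [Field F] (L : Type*) [AddCommGroup L] [Module F L]
    [FiniteDimensional F L] (ω : LinearMap.BilinForm F L) (hnd : ω.Nondegenerate)
    (u v x y : L) : E2 F L ω hnd (u ⊗ₜ v) (x ⊗ₜ y) = ω u x * ω v y := by
  simp [E2, dualDistribEquiv, dualDistribEquivOfBasis, LinearMap.BilinForm.toDual_def]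

noncomputable def E3 (F : Type*) [Field F] (L : Type*) [AddCommGroup L] [Module F L]
    [FiniteDimensional F L] (ω : LinearMap.BilinForm F L) (hnd : ω.Nondegenerate) :
    L ⊗[F] (L ⊗[F] L) ≃ₗ[F] Module.Dual F (L ⊗[F] (L ⊗[F] L)) :=
  (TensorProduct.congr (ω.toDual hnd) (E2 F L ω hnd)).trans (dualDistribEquiv F L (L ⊗[F] L))

lemma E3_tmul (F : Type*) [Field F] (L : Type*) [AddCommGroup L] [Module F L]
    [FiniteDimensional F L] (ω : LinearMap.BilinForm F L) (hnd : ω.Nondegenerate)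
    (u v w x y z : L) :
    E3 F L ω hnd (u ⊗ₜ (v ⊗ₜ w)) (x ⊗ₜ (y ⊗ₜ z)) = ω u x * (ω v y * ω w z) := by
  simp [E3, E2, dualDistribEquiv, dualDistribEquivOfBasis, LinearMap.BilinForm.toDual_def]

lemma eq_zero_of_pairing2 (F : Type*) [Field F] (L : Type*) [AddCommGroup L] [Module F L]
    [FiniteDimensional F L] (ω : LinearMap.BilinForm F L) (hnd : ω.Nondegenerate)
    (t : L ⊗[F] L) (h : ∀ x y : L, E2 F L ω hnd t (x ⊗ₜ y) = 0) : t = 0 := by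
  rw [← (E2 F L ω hnd).map_eq_zero_iff]
  apply LinearMap.ext; intro s
  induction s using TensorProduct.induction_on with
  | zero => simp
  | tmul x y => simpa using h x y
  | add s1 s2 h1 h2 => simp [map_add, h1, h2]

lemma eq_zero_of_pairing3 (F : Type*) [Field F] (L : Type*) [AddCommGroup L] [Module F L]
    [FiniteDimensional F L] (ω : LinearMap.BilinForm F L) (hnd : ω.Nondegenerate)
    (t : L ⊗[F] (L ⊗[F] L)) (h : ∀ x y z : L, E3 F L ω hnd t (x ⊗ₜ (y ⊗ₜ z)) = 0) : t = 0 := by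
  rw [← (E3 F L ω hnd).map_eq_zero_iff]
  apply LinearMap.ext; intro s
  induction s using TensorProduct.induction_on with
  | zero => simp
  | tmul x q =>
    induction q using TensorProduct.induction_on with
    | zero => simp
    | tmul y z => simpa using h x y z
    | add q1 q2 h1 h2 => simp [tmul_add, map_add, h1, h2]
  | add s1 s2 h1 h2 => simp [map_add, h1, h2]

theorem stmt_14
    (F : Type*) [Field F] [CharZero F]
    (L : Type*) [LieRing L] [LieAlgebra F L] [FiniteDimensional F L]
    (ω : LinearMap.BilinForm F L)
    (hnd : ω.Nondegenerate)
    (hsymm : ∀ x y : L, ω x y = ω y x)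
    (hinv : ∀ x y z : L, ω ⁅x, y⁆ z = ω x ⁅y, z⁆)
    (ι : Type*) [Fintype ι] (a b : ι → L)
    (R Rstar : L →ₗ[F] L)
    (hR : ∀ x : L, R x = ∑ i, ω (b i) x • a i)
    (hadj : ∀ x y : L, ω (R x) y = ω x (Rstar y))
    (lam : F) (hlam : lam ≠ 0)
    (hRB : ∀ x y : L, ⁅R x, R y⁆ = R (⁅R x, y⁆ + ⁅x, R y⁆ + lam • ⁅x, y⁆))
    (hRBs : ∀ x y : L, ⁅Rstar x, Rstar y⁆ = Rstar (⁅Rstar x, y⁆ + ⁅x, Rstar y⁆ + lam • ⁅x, y⁆))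
    (hcentroid : ∀ x y : L, R ⁅x, y⁆ + Rstar ⁅x, y⁆ = ⁅R x, y⁆ + ⁅Rstar x, y⁆)
    (I₁ I₂ : LieIdeal F L)
    (hsup : I₁ ⊔ I₂ = ⁅(⊤ : LieIdeal F L), (⊤ : LieIdeal F L)⁆)
    (hinf : I₁ ⊓ I₂ = ⊥)
    (hI₁ : ∀ x ∈ I₁, R x = 0 ∧ Rstar x = 0)
    (hI₂ : ∀ x ∈ I₂, R x + Rstar x + lam • x = 0) :
    (∑ i, ∑ j, (⁅a i, a j⁆ ⊗ₜ[F] (b i ⊗ₜ[F] b j)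
        - a i ⊗ₜ[F] (⁅a j, b i⁆ ⊗ₜ[F] b j)
        + a i ⊗ₜ[F] (a j ⊗ₜ[F] ⁅b i, b j⁆)) = (0 : L ⊗[F] (L ⊗[F] L))) ∧
    (∀ y : L, ∑ i, (⁅a i, y⁆ ⊗ₜ[F] b i + a i ⊗ₜ[F] ⁅b i, y⁆
        + ⁅b i, y⁆ ⊗ₜ[F] a i + b i ⊗ₜ[F] ⁅a i, y⁆) = (0 : L ⊗[F] L)) := by
  -- basic facts
  have hadj' : ∀ x y : L, ω (Rstar x) y = ω x (R y) := by
    intro x y; rw [hsymm, ← hadj, hsymm]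
  have hRs : ∀ x : L, Rstar x = ∑ i, ω (a i) x • b i := by
    intro x
    have key : ∀ u : L, ω (Rstar x - ∑ i, ω (a i) x • b i) u = 0 := by
      intro u
      rw [map_sub, LinearMap.sub_apply, hadj', hR, sub_eq_zero, map_sum]
      simp only [map_sum, map_smul, LinearMap.coe_sum, Finset.sum_apply,
        LinearMap.smul_apply, smul_eq_mul]
      refine Finset.sum_congr rfl fun i _ => ?_
      rw [hsymm x (a i)]; ring
    exact sub_eq_zero.mp (hnd.1 _ key)
  classical
  -- sum lemmas for brackets
  have sum_lie : ∀ (f : ι → L) (v : L), ⁅(∑ i, f i), v⁆ = ∑ i, ⁅f i, v⁆ := by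
    intro f v
    induction (Finset.univ : Finset ι) using Finset.induction_on with
    | empty => simp
    | insert _ _ h ih => rw [Finset.sum_insert h, Finset.sum_insert h, add_lie, ih]
  have lie_sum' : ∀ (f : ι → L) (v : L), ⁅v, (∑ i, f i)⁆ = ∑ i, ⁅v, f i⁆ := by
    intro f v
    induction (Finset.univ : Finset ι) using Finset.induction_on with
    | empty => simp
    | insert _ _ h ih => rw [Finset.sum_insert h, Finset.sum_insert h, lie_add, ih]
  -- S = R + R* + lam interacts with brackets
  have hSlie : ∀ u v : L, R ⁅u, v⁆ + Rstar ⁅u, v⁆ + lam • ⁅u, v⁆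
      = ⁅R u + Rstar u + lam • u, v⁆ := by
    intro u v; rw [add_lie, add_lie, smul_lie, hcentroid]
  have hSlie' : ∀ u v : L, R ⁅u, v⁆ + Rstar ⁅u, v⁆ + lam • ⁅u, v⁆
      = ⁅u, R v + Rstar v + lam • v⁆ := by
    intro u v
    have h1 := hSlie v u
    have h2 : (⁅v, u⁆ : L) = -⁅u, v⁆ := by rw [← neg_neg (⁅v,u⁆ : L), lie_skew]
    rw [h2] at h1
    conv_rhs => rw [← lie_skew, ← h1]
    simp only [map_neg, smul_neg]
    abel
  have hTswap : ∀ u v : L, ⁅R u + Rstar u, v⁆ = ⁅u, R v + Rstar v⁆ := by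
    intro u v
    have h := (hSlie u v).symm.trans (hSlie' u v)
    rw [add_lie, lie_add, smul_lie, lie_smul] at h
    exact add_right_cancel h
  have hSmem : ∀ u v : L, ∃ w ∈ I₁, R ⁅u, v⁆ + Rstar ⁅u, v⁆ + lam • ⁅u, v⁆ = lam • w := by
    intro u v
    have hm : (⁅u, v⁆ : L) ∈ I₁ ⊔ I₂ := by
      rw [hsup]
      exact LieSubmodule.lie_mem_lie (LieSubmodule.mem_top _) (LieSubmodule.mem_top _)
    obtain ⟨w₁, hw₁, w₂, hw₂, hs⟩ := (LieSubmodule.mem_sup (N := I₁) I₂ _).mp hm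
    refine ⟨w₁, hw₁, ?_⟩
    rw [← hs, map_add, map_add, smul_add, (hI₁ w₁ hw₁).1, (hI₁ w₁ hw₁).2]
    have h3 : (0:L) + R w₂ + (0 + Rstar w₂) + (lam • w₁ + lam • w₂)
        = (R w₂ + Rstar w₂ + lam • w₂) + lam • w₁ := by abel
    rw [h3, hI₂ w₂ hw₂, zero_add]
  constructor
  · apply eq_zero_of_pairing3 F L ω hnd
    intro x y z
    simp only [map_sum, map_sub, map_add, LinearMap.coe_sum, Finset.sum_apply,
      LinearMap.sub_apply, LinearMap.add_apply, E3_tmul]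
    have e1 : ∑ i, ∑ j, (ω ⁅a i, a j⁆ x * (ω (b i) y * ω (b j) z)) = ω ⁅R y, R z⁆ x := by
      rw [hR y, hR z, sum_lie]
      simp only [lie_sum', smul_lie, lie_smul, smul_smul, map_sum, map_smul,
        LinearMap.coe_sum, Finset.sum_apply, LinearMap.smul_apply, smul_eq_mul]
      exact Finset.sum_congr rfl fun i _ => Finset.sum_congr rfl fun j _ => by ring
    have e2 : ∑ i, ∑ j, (ω (a i) x * (ω ⁅a j, b i⁆ y * ω (b j) z)) = ω ⁅R z, Rstar x⁆ y := by
      rw [hR z, hRs x, Finset.sum_comm, sum_lie]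
      simp only [lie_sum', smul_lie, lie_smul, smul_smul, map_sum, map_smul,
        LinearMap.coe_sum, Finset.sum_apply, LinearMap.smul_apply, smul_eq_mul]
      exact Finset.sum_congr rfl fun j _ => Finset.sum_congr rfl fun i _ => by ring
    have e3 : ∑ i, ∑ j, (ω (a i) x * (ω (a j) y * ω ⁅b i, b j⁆ z)) = ω ⁅Rstar x, Rstar y⁆ z := by
      rw [hRs x, hRs y, sum_lie]
      simp only [lie_sum', smul_lie, lie_smul, smul_smul, map_sum, map_smul,
        LinearMap.coe_sum, Finset.sum_apply, LinearMap.smul_apply, smul_eq_mul]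
      exact Finset.sum_congr rfl fun i _ => Finset.sum_congr rfl fun j _ => by ring
    have step : (∑ i, ∑ j, (ω ⁅a i, a j⁆ x * (ω (b i) y * ω (b j) z)
        - ω (a i) x * (ω ⁅a j, b i⁆ y * ω (b j) z)
        + ω (a i) x * (ω (a j) y * ω ⁅b i, b j⁆ z)))
        = ω ⁅R y, R z⁆ x - ω ⁅R z, Rstar x⁆ y + ω ⁅Rstar x, Rstar y⁆ z := by
      rw [← e1, ← e2, ← e3]
      simp [Finset.sum_sub_distrib, Finset.sum_add_distrib]
    rw [step]
    have k1 : ω ⁅R y, R z⁆ x = ω (Rstar ⁅x, R y⁆) z := by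
      calc ω ⁅R y, R z⁆ x = ω x ⁅R y, R z⁆ := hsymm _ _
        _ = ω ⁅x, R y⁆ (R z) := (hinv _ _ _).symm
        _ = ω (R z) ⁅x, R y⁆ := hsymm _ _
        _ = ω z (Rstar ⁅x, R y⁆) := hadj _ _
        _ = ω (Rstar ⁅x, R y⁆) z := hsymm _ _
    have k2 : ω ⁅R z, Rstar x⁆ y = ω (Rstar ⁅Rstar x, y⁆) z := by
      calc ω ⁅R z, Rstar x⁆ y = ω (R z) ⁅Rstar x, y⁆ := hinv _ _ _
        _ = ω z (Rstar ⁅Rstar x, y⁆) := hadj _ _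
        _ = ω (Rstar ⁅Rstar x, y⁆) z := hsymm _ _
    rw [k1, k2, hRBs x y]
    have comb : ∀ u v w : L, ω u z - ω v z + ω w z = ω (u - v + w) z := by
      intro u v w
      simp [map_add, map_sub, LinearMap.add_apply, LinearMap.sub_apply]
    rw [comb]
    obtain ⟨w, hw, hwe⟩ := hSmem x y
    have harg : Rstar ⁅x, R y⁆ - Rstar ⁅Rstar x, y⁆
        + Rstar (⁅Rstar x, y⁆ + ⁅x, Rstar y⁆ + lam • ⁅x, y⁆) = Rstar (lam • w) := by
      rw [← map_sub, ← map_add]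
      congr 1
      have elt : ⁅x, R y⁆ - ⁅Rstar x, y⁆ + (⁅Rstar x, y⁆ + ⁅x, Rstar y⁆ + lam • ⁅x, y⁆)
          = ⁅x, R y + Rstar y + lam • y⁆ := by
        rw [lie_add, lie_add, lie_smul]; abel
      rw [elt, ← hSlie' x y, hwe]
    rw [harg, map_smul, (hI₁ w hw).2, smul_zero, map_zero]
    rfl
  · intro y
    apply eq_zero_of_pairing2 F L ω hnd
    intro x z
    simp only [map_sum, map_add, LinearMap.coe_sum, Finset.sum_apply,
      LinearMap.add_apply, E2_tmul]
    have f1 : ∑ i, ω ⁅a i, y⁆ x * ω (b i) z = ω ⁅R z, y⁆ x := by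
      rw [hR z, sum_lie]
      simp only [smul_lie, map_sum, map_smul, LinearMap.coe_sum, Finset.sum_apply,
        LinearMap.smul_apply, smul_eq_mul]
      exact Finset.sum_congr rfl fun i _ => by ring
    have f2 : ∑ i, ω (a i) x * ω ⁅b i, y⁆ z = ω ⁅Rstar x, y⁆ z := by
      rw [hRs x, sum_lie]
      simp only [smul_lie, map_sum, map_smul, LinearMap.coe_sum, Finset.sum_apply,
        LinearMap.smul_apply, smul_eq_mul]
    have f3 : ∑ i, ω ⁅b i, y⁆ x * ω (a i) z = ω ⁅Rstar z, y⁆ x := by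
      rw [hRs z, sum_lie]
      simp only [smul_lie, map_sum, map_smul, LinearMap.coe_sum, Finset.sum_apply,
        LinearMap.smul_apply, smul_eq_mul]
      exact Finset.sum_congr rfl fun i _ => by ring
    have f4 : ∑ i, ω (b i) x * ω ⁅a i, y⁆ z = ω ⁅R x, y⁆ z := by
      rw [hR x, sum_lie]
      simp only [smul_lie, map_sum, map_smul, LinearMap.coe_sum, Finset.sum_apply,
        LinearMap.smul_apply, smul_eq_mul]
    have step : (∑ i, (ω ⁅a i, y⁆ x * ω (b i) z + ω (a i) x * ω ⁅b i, y⁆ z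
        + ω ⁅b i, y⁆ x * ω (a i) z + ω (b i) x * ω ⁅a i, y⁆ z))
        = ω ⁅R z, y⁆ x + ω ⁅Rstar x, y⁆ z + ω ⁅Rstar z, y⁆ x + ω ⁅R x, y⁆ z := by
      rw [← f1, ← f2, ← f3, ← f4]
      simp [Finset.sum_add_distrib]
    rw [step]
    have g1 : ω ⁅R z, y⁆ x + ω ⁅Rstar z, y⁆ x = ω ⁅R z + Rstar z, y⁆ x := by
      rw [add_lie, map_add]; rfl
    have g2 : ω ⁅R x, y⁆ z + ω ⁅Rstar x, y⁆ z = ω ⁅R x + Rstar x, y⁆ z := by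
      rw [add_lie, map_add]; rfl
    have regroup : ω ⁅R z, y⁆ x + ω ⁅Rstar x, y⁆ z + ω ⁅Rstar z, y⁆ x + ω ⁅R x, y⁆ z
        = (ω ⁅R z, y⁆ x + ω ⁅Rstar z, y⁆ x) + (ω ⁅R x, y⁆ z + ω ⁅Rstar x, y⁆ z) := by ring
    rw [regroup, g1, g2]
    have cancel : ω ⁅R z + Rstar z, y⁆ x = - ω ⁅R x + Rstar x, y⁆ z := by
      have hy : (⁅y, R x + Rstar x⁆ : L) = -⁅R x + Rstar x, y⁆ := by
        rw [← neg_neg (⁅y, R x + Rstar x⁆ : L), lie_skew]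
      calc ω ⁅R z + Rstar z, y⁆ x = ω ⁅z, R y + Rstar y⁆ x := by rw [hTswap]
        _ = ω z ⁅R y + Rstar y, x⁆ := hinv _ _ _
        _ = ω z ⁅y, R x + Rstar x⁆ := by rw [hTswap]
        _ = ω ⁅y, R x + Rstar x⁆ z := hsymm _ _
        _ = - ω ⁅R x + Rstar x, y⁆ z := by rw [hy, map_neg]; rfl
    rw [cancel]
    ring
end

section
/- Suppose R is a Rota–Baxter operator of nonzero weight λ on L and R(a) + R*(a) + λa = 0 for all a ∈ L. Then r is a solution of the classical Yang–Baxter equation and r + τ(r) is L-invariant. -/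
open TensorProduct

section Aux

variable {F : Type*} [Field F] {L : Type*} [AddCommGroup L] [Module F L]
  [FiniteDimensional F L] (ω : LinearMap.BilinForm F L) (hnd : ω.Nondegenerate)

noncomputable def pair2 : (L ⊗[F] L) ≃ₗ[F] (L →ₗ[F] Module.Dual F L) :=
  (TensorProduct.congr (ω.toDual hnd) (ω.toDual hnd)) ≪≫ₗ
    dualTensorHomEquiv F L (Module.Dual F L)

lemma pair2_tmul (p q u w : L) :
    pair2 ω hnd (p ⊗ₜ[F] q) u w = ω p u * ω q w := by
  simp [pair2, dualTensorHomEquiv, LinearMap.BilinForm.toDual_def]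

noncomputable def pair3 : (L ⊗[F] (L ⊗[F] L)) ≃ₗ[F]
    (L →ₗ[F] (L →ₗ[F] Module.Dual F L)) :=
  (TensorProduct.congr (ω.toDual hnd) (pair2 ω hnd)) ≪≫ₗ
    dualTensorHomEquiv F L (L →ₗ[F] Module.Dual F L)

lemma pair3_tmul (p q r u v w : L) :
    pair3 ω hnd (p ⊗ₜ[F] (q ⊗ₜ[F] r)) u v w = ω p u * (ω q v * ω r w) := by
  simp [pair3, dualTensorHomEquiv, LinearMap.BilinForm.toDual_def, pair2_tmul]

end Aux

set_option maxHeartbeats 2000000 in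
theorem stmt_15
    (F : Type*) [Field F] [CharZero F]
    (L : Type*) [LieRing L] [LieAlgebra F L] [FiniteDimensional F L]
    (ω : LinearMap.BilinForm F L)
    (hnd : ω.Nondegenerate)
    (hsymm : ∀ x y : L, ω x y = ω y x)
    (hinv : ∀ x y z : L, ω ⁅x, y⁆ z = ω x ⁅y, z⁆)
    (ι : Type*) [Fintype ι] (a b : ι → L)
    (R Rstar : L →ₗ[F] L)
    (hR : ∀ x : L, R x = ∑ i, ω (b i) x • a i)
    (hadj : ∀ x y : L, ω (R x) y = ω x (Rstar y))
    (lam : F) (hlam : lam ≠ 0)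
    (hRB : ∀ x y : L, ⁅R x, R y⁆ = R (⁅R x, y⁆ + ⁅x, R y⁆ + lam • ⁅x, y⁆))
    (hth : ∀ x : L, R x + Rstar x + lam • x = 0) :
    (∑ i, ∑ j, (⁅a i, a j⁆ ⊗ₜ[F] (b i ⊗ₜ[F] b j)
        - a i ⊗ₜ[F] (⁅a j, b i⁆ ⊗ₜ[F] b j)
        + a i ⊗ₜ[F] (a j ⊗ₜ[F] ⁅b i, b j⁆)) = (0 : L ⊗[F] (L ⊗[F] L))) ∧
    (∀ y : L, ∑ i, (⁅a i, y⁆ ⊗ₜ[F] b i + a i ⊗ₜ[F] ⁅b i, y⁆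
        + ⁅b i, y⁆ ⊗ₜ[F] a i + b i ⊗ₜ[F] ⁅a i, y⁆) = (0 : L ⊗[F] L)) := by
  -- basic facts
  have cyc : ∀ u v w : L, ω ⁅u, v⁆ w = ω ⁅v, w⁆ u :=
    fun u v w => (hinv u v w).trans (hsymm u ⁅v, w⁆)
  have hSdef : ∀ u : L, Rstar u = -(R u) - lam • u := by
    intro u
    have h := hth u
    rw [add_comm (R u) (Rstar u), add_assoc, add_eq_zero_iff_eq_neg] at h
    rw [h]; abel
  have hRstar : ∀ u : L, Rstar u = ∑ i, ω (a i) u • b i := by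
    intro u
    have key : ∀ n, ω (Rstar u - ∑ i, ω (a i) u • b i) n = 0 := by
      intro n
      have h1 : ω (Rstar u) n = ∑ i, ω (b i) n * ω (a i) u := by
        rw [hsymm, ← hadj, hR]
        simp [LinearMap.sum_apply, smul_eq_mul]
      simp only [map_sub, LinearMap.sub_apply, map_sum, LinearMap.sum_apply, map_smul,
        LinearMap.smul_apply, smul_eq_mul, h1]
      rw [sub_eq_zero]
      exact Finset.sum_congr rfl fun i _ => mul_comm _ _
    have h0 := hnd.1 _ key
    rw [sub_eq_zero] at h0
    exact h0
  have lie_sum' : ∀ (u : L) (f : ι → L), ⁅u, ∑ i, f i⁆ = ∑ i, ⁅u, f i⁆ := by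
    intro u f
    exact map_sum (LieAlgebra.ad F L u) f Finset.univ
  have sum_lie' : ∀ (f : ι → L) (v : L), ⁅∑ i, f i, v⁆ = ∑ i, ⁅f i, v⁆ := by
    intro f v
    rw [← lie_skew, lie_sum', ← Finset.sum_neg_distrib]
    exact Finset.sum_congr rfl fun i _ => lie_skew _ _
  constructor
  · -- CYBE part
    have hneg : ∀ i j : ι, a i ⊗ₜ[F] (⁅b i, a j⁆ ⊗ₜ[F] b j)
        = -(a i ⊗ₜ[F] (⁅a j, b i⁆ ⊗ₜ[F] b j)) := by
      intro i j
      rw [← lie_skew, neg_tmul, tmul_neg]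
    have hsplit : (∑ i, ∑ j, (⁅a i, a j⁆ ⊗ₜ[F] (b i ⊗ₜ[F] b j)
          - a i ⊗ₜ[F] (⁅a j, b i⁆ ⊗ₜ[F] b j)
          + a i ⊗ₜ[F] (a j ⊗ₜ[F] ⁅b i, b j⁆)))
        = (∑ i, ∑ j, ⁅a i, a j⁆ ⊗ₜ[F] (b i ⊗ₜ[F] b j))
          + (∑ i, ∑ j, a i ⊗ₜ[F] (⁅b i, a j⁆ ⊗ₜ[F] b j))
          + (∑ i, ∑ j, a i ⊗ₜ[F] (a j ⊗ₜ[F] ⁅b i, b j⁆)) := by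
      simp only [hneg, sub_eq_add_neg, Finset.sum_add_distrib, Finset.sum_neg_distrib]
    rw [hsplit, ← (pair3 ω hnd).map_eq_zero_iff]
    ext x y z
    simp only [map_sum, map_add, LinearMap.sum_apply,
      LinearMap.add_apply, LinearMap.zero_apply, pair3_tmul]
    have k1 : ω ⁅R y, R z⁆ x
        = ∑ i, ∑ j, ω ⁅a i, a j⁆ x * (ω (b i) y * ω (b j) z) := by
      rw [hR y, hR z, sum_lie']
      simp only [lie_sum', smul_lie, lie_smul, map_sum, LinearMap.sum_apply, map_smul,
        LinearMap.smul_apply, smul_eq_mul, Finset.mul_sum]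
      exact Finset.sum_congr rfl fun i _ => Finset.sum_congr rfl fun j _ => by ring
    have k2 : ω ⁅Rstar x, R z⁆ y
        = ∑ i, ∑ j, ω (a i) x * (ω ⁅b i, a j⁆ y * ω (b j) z) := by
      rw [hRstar x, hR z, sum_lie']
      simp only [lie_sum', smul_lie, lie_smul, map_sum, LinearMap.sum_apply, map_smul,
        LinearMap.smul_apply, smul_eq_mul, Finset.mul_sum]
      exact Finset.sum_congr rfl fun i _ => Finset.sum_congr rfl fun j _ => by ring
    have k3 : ω ⁅Rstar x, Rstar y⁆ z
        = ∑ i, ∑ j, ω (a i) x * (ω (a j) y * ω ⁅b i, b j⁆ z) := by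
      rw [hRstar x, hRstar y, sum_lie']
      simp only [lie_sum', smul_lie, lie_smul, map_sum, LinearMap.sum_apply, map_smul,
        LinearMap.smul_apply, smul_eq_mul, Finset.mul_sum]
      exact Finset.sum_congr rfl fun i _ => Finset.sum_congr rfl fun j _ => by ring
    rw [← k1, ← k2, ← k3]
    -- now a pure scalar identity
    have dbl : ω ⁅R x, R y⁆ z
        = -(ω ⁅R x, y⁆ (R z)) - lam * ω ⁅R x, y⁆ z - ω ⁅x, R y⁆ (R z)
          - lam * ω ⁅x, R y⁆ z - lam * ω ⁅x, y⁆ (R z) - lam ^ 2 * ω ⁅x, y⁆ z := by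
      rw [hRB x y, hadj, hSdef z]
      simp only [map_add, map_smul, map_sub, map_neg, LinearMap.add_apply,
        LinearMap.smul_apply, LinearMap.sub_apply, LinearMap.neg_apply, smul_eq_mul]
      ring
    have q1 : ω ⁅R x, y⁆ (R z) = -(ω ⁅R x, R z⁆ y) := by
      rw [cyc, cyc, ← lie_skew, map_neg, LinearMap.neg_apply]
    have q2 : ω ⁅x, R y⁆ (R z) = ω ⁅R y, R z⁆ x := cyc _ _ _
    have q3 : ω ⁅x, y⁆ (R z) = -(ω ⁅x, R z⁆ y) := by
      rw [cyc, cyc, ← lie_skew, map_neg, LinearMap.neg_apply]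
    simp only [hSdef, lie_sub, sub_lie, lie_neg, neg_lie, lie_smul, smul_lie, map_sub,
      map_neg, map_smul, map_add, LinearMap.sub_apply, LinearMap.neg_apply,
      LinearMap.smul_apply, LinearMap.add_apply, smul_eq_mul]
    linear_combination dbl - q1 - q2 - lam * q3
  · -- invariance part
    intro y
    rw [← (pair2 ω hnd).map_eq_zero_iff]
    ext x z
    simp only [map_sum, map_add, LinearMap.sum_apply, LinearMap.add_apply,
      LinearMap.zero_apply, pair2_tmul]
    have m1 : (∑ i, ω ⁅a i, y⁆ x * ω (b i) z) = ω (Rstar ⁅y, x⁆) z := by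
      rw [hRstar ⁅y, x⁆]
      simp only [map_sum, LinearMap.sum_apply, map_smul, LinearMap.smul_apply, smul_eq_mul]
      exact Finset.sum_congr rfl fun i _ => by rw [hinv]
    have m2 : (∑ i, ω (a i) x * ω ⁅b i, y⁆ z) = ω (Rstar x) ⁅y, z⁆ := by
      rw [hRstar x]
      simp only [map_sum, LinearMap.sum_apply, map_smul, LinearMap.smul_apply, smul_eq_mul]
      exact Finset.sum_congr rfl fun i _ => by rw [hinv]
    have m3 : (∑ i, ω ⁅b i, y⁆ x * ω (a i) z) = ω (R ⁅y, x⁆) z := by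
      rw [hR ⁅y, x⁆]
      simp only [map_sum, LinearMap.sum_apply, map_smul, LinearMap.smul_apply, smul_eq_mul]
      exact Finset.sum_congr rfl fun i _ => by rw [hinv]
    have m4 : (∑ i, ω (b i) x * ω ⁅a i, y⁆ z) = ω (R x) ⁅y, z⁆ := by
      rw [hR x]
      simp only [map_sum, LinearMap.sum_apply, map_smul, LinearMap.smul_apply, smul_eq_mul]
      exact Finset.sum_congr rfl fun i _ => by rw [hinv]
    rw [Finset.sum_add_distrib, Finset.sum_add_distrib, Finset.sum_add_distrib,
      m1, m2, m3, m4]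
    have h5 : ω (R ⁅y, x⁆) z + ω (Rstar ⁅y, x⁆) z + lam * ω ⁅y, x⁆ z = 0 := by
      have h := congrArg (fun t => ω t z) (hth ⁅y, x⁆)
      simpa [LinearMap.add_apply, smul_eq_mul] using h
    have h6 : ω (R x) ⁅y, z⁆ + ω (Rstar x) ⁅y, z⁆ + lam * ω x ⁅y, z⁆ = 0 := by
      have h := congrArg (fun t => ω t ⁅y, z⁆) (hth x)
      simpa [LinearMap.add_apply, smul_eq_mul] using h
    have h7 : ω x ⁅y, z⁆ = -(ω ⁅y, x⁆ z) := by
      rw [← hinv, ← lie_skew, map_neg, LinearMap.neg_apply]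
    linear_combination h5 + h6 - lam * h7
end
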